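/- arXiv:1712.03759 — 7 statements merged into one kernel-verified Lean document; each statement's English description precedes it below -/
import Mathlib

section
/- Let ξ : ℤ → {0,1} be a recurrent bi-infinite word (every finite factor of ξ occurs in ξ(-∞,i] and in ξ[i,∞) for every i ∈ ℤ). If some factor u of ξ is right-determining in F(ξ) (i.e., for every k ∈ ℕ there is exactly one word of the form u·v in F(ξ) with |v| = k), then ξ is periodic, i.e., there exists p > 0 with ξ(n) = ξ(n+p) for all n ∈ ℤ. -/
set_option linter.unnecessarySeqFocus false

/-- `u` occurs in the bi-infinite word `ξ` starting at position `i`. -/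
def FactorAt (ξ : ℤ → Bool) (u : List Bool) (i : ℤ) : Prop :=
  ∀ k : ℕ, k < u.length → u.getD k false = ξ (i + k)

/-- The set of finite factors of the bi-infinite word `ξ`. -/
def Factors (ξ : ℤ → Bool) : Set (List Bool) :=
  {u | ∃ i : ℤ, FactorAt ξ u i}

/-- `ξ` is recurrent: every factor occurs entirely within `(-∞,i]` and within `[i,∞)`
for every `i`. -/
def Recurrent (ξ : ℤ → Bool) : Prop :=
  ∀ u ∈ Factors ξ, ∀ i : ℤ,
    (∃ j : ℤ, j + u.length ≤ i ∧ FactorAt ξ u j) ∧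
    (∃ j : ℤ, i ≤ j ∧ FactorAt ξ u j)

/-- `ξ` is periodic. -/
def BiPeriodic (ξ : ℤ → Bool) : Prop :=
  ∃ p : ℤ, 0 < p ∧ ∀ n : ℤ, ξ n = ξ (n + p)

/-- `u` is right-determining in `F(ξ)`: for every `k` there is exactly one `v` of
length `k` with `u ++ v ∈ F(ξ)`. -/
def RightDet (ξ : ℤ → Bool) (u : List Bool) : Prop :=
  ∀ k : ℕ, ∃! v : List Bool, v.length = k ∧ u ++ v ∈ Factors ξ

/-- `u` is left-determining in `F(ξ)`. -/
def LeftDet (ξ : ℤ → Bool) (u : List Bool) : Prop :=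
  ∀ k : ℕ, ∃! v : List Bool, v.length = k ∧ v ++ u ∈ Factors ξ

lemma factorAt_ofFn (ξ : ℤ → Bool) (a : ℤ) (K : ℕ) :
    FactorAt ξ (List.ofFn fun t : Fin K => ξ (a + t)) a := by
  intro m hm
  rw [List.length_ofFn] at hm
  rw [List.getD_eq_getElem _ _ (by simpa using hm), List.getElem_ofFn]

lemma factorAt_append {ξ : ℤ → Bool} {u v : List Bool} {i : ℤ}
    (hu : FactorAt ξ u i) (hv : FactorAt ξ v (i + u.length)) :
    FactorAt ξ (u ++ v) i := by
  intro k hk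
  rw [List.length_append] at hk
  by_cases h : k < u.length
  · rw [List.getD_eq_getElem _ _ (by simp; omega), List.getElem_append_left h,
      ← List.getD_eq_getElem _ _ h]
    exact hu k h
  · push_neg at h
    rw [List.getD_eq_getElem _ _ (by simp; omega), List.getElem_append_right h,
      ← List.getD_eq_getElem _ _ (by omega)]
    have := hv (k - u.length) (by omega)
    rw [this]
    congr 1
    push_cast [Nat.cast_sub h]
    ring

theorem right_determining_implies_periodic (ξ : ℤ → Bool) (hrec : Recurrent ξ)
    (u : List Bool) (hu : u ∈ Factors ξ) (hdet : RightDet ξ u) :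
    BiPeriodic ξ := by
  obtain ⟨i, hi⟩ := hu
  obtain ⟨-, j, hij, hj⟩ := hrec u ⟨i, hi⟩ (i + 1)
  set L : ℤ := (u.length : ℤ) with hL
  set p : ℤ := j - i with hp
  have hppos : 0 < p := by omega
  -- the tail after i + L is p-periodic
  have tail : ∀ m : ℤ, i + L ≤ m → ξ m = ξ (m + p) := by
    intro m hm
    set t : ℕ := (m - (i + L)).toNat with ht
    have hmt : m = i + L + t := by simp [ht]; omega
    have key : ∀ s : ℕ, s < t + 1 → ξ (i + L + s) = ξ (j + L + s) := by
      intro s hs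
      have h1 : FactorAt ξ (u ++ List.ofFn fun r : Fin (t+1) => ξ (i + L + r)) i :=
        factorAt_append hi (factorAt_ofFn ξ (i + L) (t+1))
      have h2 : FactorAt ξ (u ++ List.ofFn fun r : Fin (t+1) => ξ (j + L + r)) j :=
        factorAt_append hj (factorAt_ofFn ξ (j + L) (t+1))
      obtain ⟨w, -, hwu⟩ := hdet (t+1)
      have e1 := hwu _ ⟨by simp, ⟨i, h1⟩⟩
      have e2 := hwu _ ⟨by simp, ⟨j, h2⟩⟩
      have e : (List.ofFn fun r : Fin (t+1) => ξ (i + L + r)) =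
          (List.ofFn fun r : Fin (t+1) => ξ (j + L + r)) := by rw [e1, e2]
      have a1 : (List.ofFn fun r : Fin (t+1) => ξ (i + L + r)).getD s false = ξ (i + L + s) := by
        rw [List.getD_eq_getElem _ _ (by simpa using hs), List.getElem_ofFn]
      have a2 : (List.ofFn fun r : Fin (t+1) => ξ (j + L + r)).getD s false = ξ (j + L + s) := by
        rw [List.getD_eq_getElem _ _ (by simpa using hs), List.getElem_ofFn]
      rw [e] at a1
      exact a1.symm.trans a2
    have := key t (by omega)
    rw [hmt]
    convert this using 2 <;> omega
  refine ⟨p, hppos, fun n => ?_⟩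
  -- transfer using recurrence
  set P : ℕ := p.toNat with hP
  have hPp : (P : ℤ) = p := by omega
  have hw : (List.ofFn fun r : Fin (P+1) => ξ (n + r)) ∈ Factors ξ :=
    ⟨n, factorAt_ofFn ξ n (P+1)⟩
  obtain ⟨-, m, hmL, hm⟩ := hrec _ hw (i + L)
  have hval : ∀ s : ℕ, s < P + 1 → ξ (n + s) = ξ (m + s) := by
    intro s hs
    have := hm s (by simpa using hs)
    rw [List.getD_eq_getElem _ _ (by simpa using hs), List.getElem_ofFn] at this
    exact this
  have h0 := hval 0 (by omega)
  have hPv := hval P (by omega)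
  simp only [Nat.cast_zero, add_zero] at h0
  calc ξ n = ξ m := h0
    _ = ξ (m + p) := tail m hmL
    _ = ξ (m + (P:ℤ)) := by rw [hPp]
    _ = ξ (n + (P:ℤ)) := hPv.symm
    _ = ξ (n + p) := by rw [hPp]
end

section
/- Let ξ : ℤ → {0,1} be a recurrent bi-infinite word. If some factor u of ξ is left-determining in F(ξ) (for every k ∈ ℕ there is exactly one word v·u ∈ F(ξ) with |v| = k), then ξ is periodic. -/
lemma key_fac (ξ : ℤ → Bool) (u : List Bool) (t : ℕ) (c : ℤ) (hc : FactorAt ξ u c) :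
    FactorAt ξ ((List.range t).map (fun d : ℕ => ξ (c - t + d)) ++ u) (c - t) := by
  intro k hk
  simp only [List.length_append, List.length_map, List.length_range] at hk
  by_cases h : k < t
  · rw [List.getD_append _ _ _ _ (by simpa using h)]
    simp [List.getD_eq_getElem?_getD, h]
  · rw [List.getD_append_right _ _ _ _ (by simpa using h)]
    simp only [List.length_map, List.length_range]
    have h2 : k - t < u.length := by omega
    have := hc (k - t) h2
    rw [this]
    congr 1
    push_cast [Nat.cast_sub (by omega : t ≤ k)]
    ring

lemma left_ext (ξ : ℤ → Bool) (u : List Bool) (hdet : LeftDet ξ u)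
    {a b : ℤ} (ha : FactorAt ξ u a) (hb : FactorAt ξ u b) (t : ℕ) (ht : 1 ≤ t) :
    ξ (a - t) = ξ (b - t) := by
  obtain ⟨v, -, huniq⟩ := hdet t
  have hva := huniq ((List.range t).map (fun d : ℕ => ξ (a - t + d)))
    ⟨by simp, ⟨a - t, key_fac ξ u t a ha⟩⟩
  have hvb := huniq ((List.range t).map (fun d : ℕ => ξ (b - t + d)))
    ⟨by simp, ⟨b - t, key_fac ξ u t b hb⟩⟩
  have := congrArg (fun l => l.getD 0 false) (hva.trans hvb.symm)
  simp only [List.getD_eq_getElem?_getD, List.getElem?_map, List.getElem?_range,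
    (by omega : 0 < t)] at this
  simpa using this

theorem left_determining_implies_periodic (ξ : ℤ → Bool) (hrec : Recurrent ξ)
    (u : List Bool) (hu : u ∈ Factors ξ) (hdet : LeftDet ξ u) :
    BiPeriodic ξ := by
  obtain ⟨a, ha⟩ := hu
  obtain ⟨b, hb, hblt⟩ : ∃ b : ℤ, FactorAt ξ u b ∧ b < a := by
    rcases Nat.eq_zero_or_pos u.length with h0 | hpos
    · exact ⟨a - 1, fun k hk => absurd hk (by omega), by omega⟩
    · obtain ⟨⟨j, hj, hjf⟩, -⟩ := hrec u ⟨a, ha⟩ a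
      exact ⟨j, hjf, by omega⟩
  refine ⟨a - b, by omega, fun n => ?_⟩
  obtain ⟨-, m, hm, hmf⟩ := hrec u ⟨a, ha⟩ (n + (a - b) + 1)
  set t : ℕ := (m - n).toNat with htdef
  set s : ℕ := (m - n - (a - b)).toNat with hsdef
  have ht : (t : ℤ) = m - n := Int.toNat_of_nonneg (by omega)
  have hs : (s : ℤ) = m - n - (a - b) := Int.toNat_of_nonneg (by omega)
  have ht1 : 1 ≤ t := by omega
  have hs1 : 1 ≤ s := by omega
  calc ξ n = ξ (m - t) := by congr 1; omega
    _ = ξ (a - t) := left_ext ξ u hdet hmf ha t ht1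
    _ = ξ (b - s) := by congr 1; omega
    _ = ξ (a - s) := left_ext ξ u hdet hb ha s hs1
    _ = ξ (m - s) := left_ext ξ u hdet ha hmf s hs1
    _ = ξ (n + (a - b)) := by congr 1; omega
end

section
/- If ξ : ℤ → {0,1} is a periodic bi-infinite word with period p (the least p > 0 such that ξ(n) = ξ(n+p) for all n), then the factor u = ξ(1)ξ(2)⋯ξ(p) of length p is both left-determining and right-determining in F(ξ). -/
private lemma per_all (ξ : ℤ → Bool) (p : ℕ)
    (hper : ∀ n : ℤ, ξ n = ξ (n + (p : ℤ))) :
    ∀ (n m : ℤ), (p : ℤ) ∣ m → ξ (n + m) = ξ n := by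
  have key : ∀ c : ℤ, ∀ n : ℤ, ξ (n + (p : ℤ) * c) = ξ n := by
    intro c
    induction c using Int.induction_on with
    | zero => simp
    | succ c ih =>
      intro n
      have h := hper (n + (p : ℤ) * c)
      rw [show n + (p : ℤ) * ((c : ℤ) + 1) = n + (p : ℤ) * c + (p : ℤ) by ring,
        ← h, ih]
    | pred c ih =>
      intro n
      rw [hper (n + (p : ℤ) * (-(c : ℤ) - 1)),
        show n + (p : ℤ) * (-(c : ℤ) - 1) + (p : ℤ) = n + (p : ℤ) * (-(c : ℤ)) by ring]
      exact ih n
  rintro n m ⟨c, rfl⟩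
  exact key c n

/-- Occurrences of the period block are at positions `≡ 1 (mod p)`. -/
private lemma occ_cong (ξ : ℤ → Bool) (p : ℕ) (hp : 0 < p)
    (hper : ∀ n : ℤ, ξ n = ξ (n + (p : ℤ)))
    (hleast : ∀ q : ℕ, 0 < q → (∀ n : ℤ, ξ n = ξ (n + (q : ℤ))) → p ≤ q)
    (j : ℤ) (hj : FactorAt ξ ((List.range p).map fun a : ℕ => ξ (1 + (a : ℤ))) j) :
    (p : ℤ) ∣ j - 1 := by
  have hp' : (0 : ℤ) < (p : ℤ) := by exact_mod_cast hp
  set d : ℤ := (j - 1) % (p : ℤ) with hd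
  have hd0 : 0 ≤ d := Int.emod_nonneg _ (by omega)
  have hdp : d < (p : ℤ) := Int.emod_lt_of_pos _ hp'
  have hdvd : (p : ℤ) ∣ (j - 1) - d := Int.dvd_self_sub_of_emod_eq rfl
  -- ξ has period d
  have hdper : ∀ n : ℤ, ξ n = ξ (n + d) := by
    intro n
    set k : ℤ := (n - 1) % (p : ℤ) with hk
    have hk0 : 0 ≤ k := Int.emod_nonneg _ (by omega)
    have hkp : k < (p : ℤ) := Int.emod_lt_of_pos _ hp'
    have hkdvd : (p : ℤ) ∣ (n - 1) - k := Int.dvd_self_sub_of_emod_eq rfl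
    have h1 : ξ n = ξ (1 + k) := by
      have h := per_all ξ p hper (1 + k) ((n - 1) - k) hkdvd
      rw [show 1 + k + ((n - 1) - k) = n by ring] at h
      exact h
    have h2 : ξ (n + d) = ξ (j + k) := by
      have hdvd2 : (p : ℤ) ∣ ((n - 1) - k) - ((j - 1) - d) := dvd_sub hkdvd hdvd
      have h := per_all ξ p hper (j + k) (((n - 1) - k) - ((j - 1) - d)) hdvd2
      rw [show j + k + (((n - 1) - k) - ((j - 1) - d)) = n + d by ring] at h
      exact h
    have h3 : ξ (j + k) = ξ (1 + k) := by
      have hklt : k.toNat < p := by omega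
      have h := hj k.toNat (by simpa using hklt)
      have hget : ((List.range p).map fun a : ℕ => ξ (1 + (a : ℤ))).getD k.toNat false
          = ξ (1 + (k.toNat : ℤ)) := by
        simp [List.getD_eq_getElem, hklt]
      rw [hget] at h
      rw [Int.toNat_of_nonneg hk0] at h
      exact h.symm
    rw [h1, ← h3, ← h2]
  by_contra hne
  have hdne : d ≠ 0 := by
    intro h0
    exact hne (by simpa [h0] using hdvd)
  have hdnat : 0 < d.toNat := by omega
  have hle : p ≤ d.toNat := by
    apply hleast d.toNat hdnat
    intro n
    have h := hdper n
    rwa [show ((d.toNat : ℤ)) = d from Int.toNat_of_nonneg hd0]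
  omega

theorem period_word_is_determining (ξ : ℤ → Bool) (p : ℕ) (hp : 0 < p)
    (hper : ∀ n : ℤ, ξ n = ξ (n + (p : ℤ)))
    (hleast : ∀ q : ℕ, 0 < q → (∀ n : ℤ, ξ n = ξ (n + (q : ℤ))) → p ≤ q) :
    LeftDet ξ ((List.range p).map fun k => ξ (1 + k)) ∧
    RightDet ξ ((List.range p).map fun k => ξ (1 + k)) := by
  have hnorm : ((List.range p).map fun k => ξ (1 + k))
      = (List.range p).map (fun a : ℕ => ξ (1 + (a : ℤ))) := by
    show List.map _ ((List.range p).flatMap fun (a : ℕ) => [(a : ℤ)]) = _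
    rw [← List.map_eq_flatMap, List.map_map]
    rfl
  rw [hnorm]
  set u : List Bool := (List.range p).map (fun a : ℕ => ξ (1 + (a : ℤ))) with hu
  have hulen : u.length = p := by simp [hu]
  have huget : ∀ m : ℕ, m < p → u.getD m false = ξ (1 + (m : ℤ)) := by
    intro m hm
    simp [hu, List.getD_eq_getElem, hm]
  have hshift : ∀ (i c : ℤ), (p : ℤ) ∣ i - c → ∀ m : ℤ, ξ (i + m) = ξ (c + m) := by
    intro i c hdvd m
    have h := per_all ξ p hper (c + m) (i - c) hdvd
    rw [show c + m + (i - c) = i + m by ring] at h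
    exact h
  constructor
  · -- LeftDet
    intro k
    refine ⟨(List.range k).map (fun m : ℕ => ξ (1 - (k : ℤ) + (m : ℤ))),
      ⟨by simp, ⟨1 - (k : ℤ), ?_⟩⟩, ?_⟩
    · intro m hm
      simp only [List.length_append, List.length_map, List.length_range, hulen] at hm
      by_cases hmk : m < k
      · rw [List.getD_append _ _ _ _ (by simp [hmk])]
        simp [List.getD_eq_getElem, hmk]
      · push_neg at hmk
        rw [List.getD_append_right _ _ _ _ (by simp [hmk])]
        simp only [List.length_map, List.length_range]
        rw [huget (m - k) (by omega)]
        congr 1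
        push_cast [Nat.cast_sub hmk]
        ring
    · rintro w ⟨hwlen, i, hw⟩
      have hocc : FactorAt ξ u (i + k) := by
        intro m hm
        have h := hw (k + m) (by simp [hulen, hwlen]; omega)
        rw [List.getD_append_right _ _ _ _ (by omega)] at h
        rw [hwlen, Nat.add_sub_cancel_left] at h
        rw [h]
        push_cast
        ring_nf
      have hcong : (p : ℤ) ∣ (i + k) - 1 := occ_cong ξ p hp hper hleast _ hocc
      have hdvd : (p : ℤ) ∣ i - (1 - (k : ℤ)) := by
        rw [show i - (1 - (k : ℤ)) = (i + k) - 1 by ring]; exact hcong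
      apply List.ext_getElem (by simp [hwlen])
      intro m h1 h2
      have hmk : m < k := by simpa [hwlen] using h1
      have hwm := hw m (by simp [hwlen]; omega)
      rw [List.getD_append _ _ _ _ (by omega)] at hwm
      have hwm' : w[m] = ξ (i + m) := by
        rw [← hwm, List.getD_eq_getElem _ _ h1]
      rw [hwm', hshift i (1 - (k : ℤ)) hdvd m]
      simp [List.getD_eq_getElem, hmk]
  · -- RightDet
    intro k
    refine ⟨(List.range k).map (fun m : ℕ => ξ (1 + (p : ℤ) + (m : ℤ))),
      ⟨by simp, ⟨1, ?_⟩⟩, ?_⟩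
    · intro m hm
      simp only [List.length_append, List.length_map, List.length_range, hulen] at hm
      by_cases hmp : m < p
      · rw [List.getD_append _ _ _ _ (by simp [hulen, hmp])]
        rw [huget m hmp]
      · push_neg at hmp
        rw [List.getD_append_right _ _ _ _ (by simp [hulen, hmp])]
        rw [hulen]
        have hlt : m - p < k := by omega
        simp only [List.getD_eq_getElem, List.getElem_map, List.getElem_range,
          List.length_map, List.length_range, hlt]
        congr 1
        push_cast [Nat.cast_sub hmp]
        ring
    · rintro w ⟨hwlen, i, hw⟩
      have hocc : FactorAt ξ u i := by
        intro m hm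
        have h := hw m (by simp [hulen]; omega)
        rw [List.getD_append _ _ _ _ (by omega)] at h
        exact h
      have hcong : (p : ℤ) ∣ i - 1 := occ_cong ξ p hp hper hleast _ hocc
      apply List.ext_getElem (by simp [hwlen])
      intro m h1 h2
      have hmk : m < k := by simpa [hwlen] using h1
      have hwm := hw (p + m) (by simp [hulen, hwlen]; omega)
      rw [List.getD_append_right _ _ _ _ (by omega)] at hwm
      rw [hulen, Nat.add_sub_cancel_left] at hwm
      have hwm' : w[m] = ξ (i + ((p + m : ℕ) : ℤ)) := by
        rw [← hwm, List.getD_eq_getElem _ _ h1]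
      rw [hwm']
      have hs := hshift i 1 hcong ((p : ℤ) + (m : ℤ))
      rw [show i + ((p : ℤ) + (m : ℤ)) = i + ((p + m : ℕ) : ℤ) by push_cast; ring] at hs
      rw [hs]
      simp [List.getD_eq_getElem, hmk]
      ring_nf
end

section
/- Let L ⊆ {0,1}* be a set of finite words such that (a) L contains a non-empty word, (b) L is closed under factors (if uvw ∈ L then v ∈ L), and (c) for all u, w ∈ L there exists v ∈ {0,1}* with uvw ∈ L. Then there exists a recurrent bi-infinite word ξ : ℤ → {0,1} with F(ξ) = L. -/
namespace RecWordAux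

/-- occurrences restrict to infixes -/
lemma factorAt_infix {ξ : ℤ → Bool} {p u q : List Bool} {i : ℤ}
    (h : FactorAt ξ (p ++ u ++ q) i) : FactorAt ξ u (i + p.length) := by
  intro k hk
  have hlen : p.length + k < (p ++ u ++ q).length := by simp; omega
  have h2 := h (p.length + k) hlen
  have : (p ++ u ++ q).getD (p.length + k) false = u.getD k false := by
    rw [List.getD_eq_getElem?_getD, List.getD_eq_getElem?_getD]
    rw [show p ++ u ++ q = p ++ (u ++ q) by simp,
      List.getElem?_append_right (by omega), Nat.add_sub_cancel_left,
      List.getElem?_append]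
    simp [hk]
  rw [this] at h2
  rw [h2]
  congr 1
  push_cast
  ring

section Construction

variable (L : Set (List Bool))

lemma glue_ex (hc : ∀ u ∈ L, ∀ w ∈ L, ∃ v, u ++ v ++ w ∈ L)
    (u t : List Bool) (hu : u ∈ L) (ht : t ∈ L) :
    ∃ m : List Bool, u ++ m ++ u ∈ L ∧ ∃ p q, m = p ++ t ++ q := by
  obtain ⟨a, ha⟩ := hc u hu t ht
  obtain ⟨b, hb⟩ := hc (u ++ a ++ t) ha u hu
  refine ⟨a ++ t ++ b, ?_, a, b, rfl⟩
  have : u ++ (a ++ t ++ b) ++ u = u ++ a ++ t ++ b ++ u := by simp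
  rw [this]; exact hb

variable (hc : ∀ u ∈ L, ∀ w ∈ L, ∃ v, u ++ v ++ w ∈ L)
variable (t : ℕ → {l : List Bool // l ∈ L})

noncomputable def glueM (x y : {l : List Bool // l ∈ L}) : List Bool :=
  (glue_ex L hc x.1 y.1 x.2 y.2).choose

lemma glueM_mem (x y : {l : List Bool // l ∈ L}) :
    x.1 ++ glueM L hc x y ++ x.1 ∈ L :=
  (glue_ex L hc x.1 y.1 x.2 y.2).choose_spec.1

lemma glueM_pq (x y : {l : List Bool // l ∈ L}) :
    ∃ p q, glueM L hc x y = p ++ y.1 ++ q :=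
  (glue_ex L hc x.1 y.1 x.2 y.2).choose_spec.2

variable (w0 : {l : List Bool // l ∈ L})

noncomputable def wseq : ℕ → {l : List Bool // l ∈ L}
  | 0 => w0
  | n+1 => ⟨(wseq n).1 ++ glueM L hc (wseq n) (t n) ++ (wseq n).1,
      glueM_mem L hc (wseq n) (t n)⟩

/-- length increment at step n -/
noncomputable def dseq (n : ℕ) : ℕ :=
  (glueM L hc (wseq L hc t w0 n) (t n)).length + (wseq L hc t w0 n).1.length

lemma wseq_succ (n : ℕ) :
    (wseq L hc t w0 (n+1)).1
      = (wseq L hc t w0 n).1 ++ glueM L hc (wseq L hc t w0 n) (t n)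
          ++ (wseq L hc t w0 n).1 := rfl

lemma wseq_len_succ (n : ℕ) :
    (wseq L hc t w0 (n+1)).1.length = (wseq L hc t w0 n).1.length + dseq L hc t w0 n := by
  rw [wseq_succ]; simp [dseq]; try omega

lemma wseq_len_pos (hw0 : w0.1 ≠ []) (n : ℕ) : 1 ≤ (wseq L hc t w0 n).1.length := by
  induction n with
  | zero => exact List.length_pos_iff.2 hw0
  | succ n ih => rw [wseq_len_succ]; omega

lemma dseq_pos (hw0 : w0.1 ≠ []) (n : ℕ) : 1 ≤ dseq L hc t w0 n := by
  have := wseq_len_pos L hc t w0 hw0 n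
  unfold dseq; omega

/-- left endpoint of placement of `wseq n` -/
noncomputable def lseq : ℕ → ℤ
  | 0 => 0
  | n+1 => if n % 2 = 0 then lseq n - dseq L hc t w0 n else lseq n

lemma lseq_succ_even {n : ℕ} (h : n % 2 = 0) :
    lseq L hc t w0 (n+1) = lseq L hc t w0 n - dseq L hc t w0 n := by
  simp [lseq, h]

lemma lseq_succ_odd {n : ℕ} (h : ¬ n % 2 = 0) :
    lseq L hc t w0 (n+1) = lseq L hc t w0 n := by
  simp [lseq, h]

noncomputable def rseq (n : ℕ) : ℤ := lseq L hc t w0 n + (wseq L hc t w0 n).1.length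

lemma rseq_succ_even {n : ℕ} (h : n % 2 = 0) :
    rseq L hc t w0 (n+1) = rseq L hc t w0 n := by
  simp only [rseq, lseq, h, if_true, wseq_len_succ]
  push_cast; ring

lemma rseq_succ_odd {n : ℕ} (h : ¬ n % 2 = 0) :
    rseq L hc t w0 (n+1) = rseq L hc t w0 n + dseq L hc t w0 n := by
  simp only [rseq, lseq, h, if_false, wseq_len_succ]
  push_cast; ring

lemma lseq_succ_le (n : ℕ) : lseq L hc t w0 (n+1) ≤ lseq L hc t w0 n := by
  by_cases h : n % 2 = 0
  · rw [lseq_succ_even L hc t w0 h]; omega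
  · rw [lseq_succ_odd L hc t w0 h]

lemma rseq_le_succ (n : ℕ) : rseq L hc t w0 n ≤ rseq L hc t w0 (n+1) := by
  by_cases h : n % 2 = 0
  · rw [rseq_succ_even L hc t w0 h]
  · rw [rseq_succ_odd L hc t w0 h]; omega

lemma lseq_mono : ∀ {m n : ℕ}, m ≤ n → lseq L hc t w0 n ≤ lseq L hc t w0 m := by
  intro m n h
  induction n with
  | zero => have : m = 0 := by omega
            subst this; rfl
  | succ n ih =>
    rcases Nat.lt_or_ge m (n+1) with h' | h'
    · exact le_trans (lseq_succ_le L hc t w0 n) (ih (by omega))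
    · have : m = n + 1 := by omega
      subst this; rfl

lemma rseq_mono : ∀ {m n : ℕ}, m ≤ n → rseq L hc t w0 m ≤ rseq L hc t w0 n := by
  intro m n h
  induction n with
  | zero => have : m = 0 := by omega
            subst this; rfl
  | succ n ih =>
    rcases Nat.lt_or_ge m (n+1) with h' | h'
    · exact le_trans (ih (by omega)) (rseq_le_succ L hc t w0 n)
    · have : m = n + 1 := by omega
      subst this; rfl

lemma lseq_bound (hw0 : w0.1 ≠ []) (k : ℕ) : lseq L hc t w0 (2*k) ≤ -(k : ℤ) := by
  induction k with
  | zero => simp [lseq]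
  | succ k ih =>
    have h1 : lseq L hc t w0 (2*k+1) = lseq L hc t w0 (2*k) - dseq L hc t w0 (2*k) := by
      apply lseq_succ_even; omega
    have h2 : lseq L hc t w0 (2*(k+1)) = lseq L hc t w0 (2*k+1) := by
      have e : 2*(k+1) = (2*k+1)+1 := by ring
      rw [e]; apply lseq_succ_odd; omega
    have hd := dseq_pos L hc t w0 hw0 (2*k)
    rw [h2, h1]
    push_cast; omega

lemma rseq_bound (hw0 : w0.1 ≠ []) (k : ℕ) : (k : ℤ) + 1 ≤ rseq L hc t w0 (2*k) := by
  induction k with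
  | zero =>
    have := wseq_len_pos L hc t w0 hw0 0
    simp [rseq, lseq]
    omega
  | succ k ih =>
    have h1 : rseq L hc t w0 (2*k+1) = rseq L hc t w0 (2*k) := by
      apply rseq_succ_even; omega
    have h2 : rseq L hc t w0 (2*(k+1)) = rseq L hc t w0 (2*k+1) + dseq L hc t w0 (2*k+1) := by
      have e : 2*(k+1) = (2*k+1)+1 := by ring
      rw [e]; apply rseq_succ_odd; omega
    have hd := dseq_pos L hc t w0 hw0 (2*k+1)
    rw [h2, h1]
    push_cast; omega

/-- one-step consistency of the placement -/
lemma step_consistent (n : ℕ) (i : ℤ) (h1 : lseq L hc t w0 n ≤ i) (h2 : i < rseq L hc t w0 n) :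
    (wseq L hc t w0 (n+1)).1.getD (i - lseq L hc t w0 (n+1)).toNat false
      = (wseq L hc t w0 n).1.getD (i - lseq L hc t w0 n).toNat false := by
  set j := (i - lseq L hc t w0 n).toNat with hjdef
  have hj : (j : ℤ) = i - lseq L hc t w0 n := Int.toNat_of_nonneg (by omega)
  have hjlt : j < (wseq L hc t w0 n).1.length := by
    have := h2
    simp only [rseq] at this
    omega
  by_cases hpar : n % 2 = 0
  · have e : i - lseq L hc t w0 (n+1) = ((j + dseq L hc t w0 n : ℕ) : ℤ) := by
      rw [lseq_succ_even L hc t w0 hpar]; push_cast; omega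
    rw [e, Int.toNat_natCast]
    rw [List.getD_eq_getElem?_getD, List.getD_eq_getElem?_getD, wseq_succ,
      List.getElem?_append_right (l₁ := (wseq L hc t w0 n).1 ++ glueM L hc (wseq L hc t w0 n) (t n))
        (by simp [dseq]; omega)]
    have e2 : j + dseq L hc t w0 n
        - ((wseq L hc t w0 n).1 ++ glueM L hc (wseq L hc t w0 n) (t n)).length = j := by
      simp [dseq]; omega
    rw [e2]
  · have e : i - lseq L hc t w0 (n+1) = ((j : ℕ) : ℤ) := by
      rw [lseq_succ_odd L hc t w0 hpar]; omega
    rw [e, Int.toNat_natCast]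
    rw [List.getD_eq_getElem?_getD, List.getD_eq_getElem?_getD, wseq_succ,
      List.getElem?_append_left (by simp; omega),
      List.getElem?_append_left hjlt]

/-- nested consistency -/
lemma nest_consistent : ∀ m n : ℕ, m ≤ n → ∀ i : ℤ,
    lseq L hc t w0 m ≤ i → i < rseq L hc t w0 m →
    (wseq L hc t w0 n).1.getD (i - lseq L hc t w0 n).toNat false
      = (wseq L hc t w0 m).1.getD (i - lseq L hc t w0 m).toNat false := by
  intro m n hmn
  induction n, hmn using Nat.le_induction with
  | base => intro i _ _; rfl
  | succ n hmn ih =>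
    intro i hi1 hi2
    have hl := lseq_mono L hc t w0 hmn
    have hr := rseq_mono L hc t w0 hmn
    rw [step_consistent L hc t w0 n i (by omega) (by omega)]
    exact ih i hi1 hi2

noncomputable def xi : ℤ → Bool := fun i =>
  (wseq L hc t w0 (2 * i.natAbs)).1.getD (i - lseq L hc t w0 (2 * i.natAbs)).toNat false

lemma xi_eq (hw0 : w0.1 ≠ []) (n : ℕ) (i : ℤ)
    (h1 : lseq L hc t w0 n ≤ i) (h2 : i < rseq L hc t w0 n) :
    xi L hc t w0 i = (wseq L hc t w0 n).1.getD (i - lseq L hc t w0 n).toNat false := by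
  have hN1 : lseq L hc t w0 (2 * i.natAbs) ≤ i := by
    have := lseq_bound L hc t w0 hw0 i.natAbs
    omega
  have hN2 : i < rseq L hc t w0 (2 * i.natAbs) := by
    have := rseq_bound L hc t w0 hw0 i.natAbs
    omega
  have e1 := nest_consistent L hc t w0 (2 * i.natAbs) (max n (2 * i.natAbs))
    (le_max_right _ _) i hN1 hN2
  have e2 := nest_consistent L hc t w0 n (max n (2 * i.natAbs)) (le_max_left _ _) i h1 h2
  rw [xi, ← e1, e2]

lemma factorAt_wseq (hw0 : w0.1 ≠ []) (n : ℕ) :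
    FactorAt (xi L hc t w0) (wseq L hc t w0 n).1 (lseq L hc t w0 n) := by
  intro k hk
  rw [xi_eq L hc t w0 hw0 n (lseq L hc t w0 n + k) (by omega)
      (by simp only [rseq]; omega)]
  congr 1
  omega

lemma wseq_prefix {m n : ℕ} (hmn : m ≤ n) :
    ∃ s, (wseq L hc t w0 n).1 = (wseq L hc t w0 m).1 ++ s := by
  induction n, hmn using Nat.le_induction with
  | base => exact ⟨[], by simp⟩
  | succ n hmn ih =>
    obtain ⟨s, hs⟩ := ih
    refine ⟨s ++ glueM L hc (wseq L hc t w0 n) (t n) ++ (wseq L hc t w0 n).1, ?_⟩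
    rw [wseq_succ, hs]
    simp

lemma wseq_suffix {m n : ℕ} (hmn : m ≤ n) :
    ∃ s, (wseq L hc t w0 n).1 = s ++ (wseq L hc t w0 m).1 := by
  induction n, hmn using Nat.le_induction with
  | base => exact ⟨[], by simp⟩
  | succ n hmn ih =>
    obtain ⟨s, hs⟩ := ih
    refine ⟨(wseq L hc t w0 n).1 ++ glueM L hc (wseq L hc t w0 n) (t n) ++ s, ?_⟩
    rw [wseq_succ, hs]
    simp

end Construction

end RecWordAux

theorem exists_recurrent_word_with_factor_set (L : Set (List Bool))
    (ha : ∃ u ∈ L, u ≠ [])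
    (hb : ∀ u v w : List Bool, u ++ v ++ w ∈ L → v ∈ L)
    (hc : ∀ u ∈ L, ∀ w ∈ L, ∃ v : List Bool, u ++ v ++ w ∈ L) :
    ∃ ξ : ℤ → Bool, Recurrent ξ ∧ Factors ξ = L := by
  classical
  obtain ⟨u0, hu0, hu0ne⟩ := ha
  have hnil : ([] : List Bool) ∈ L := hb u0 [] [] (by simpa using hu0)
  let f : ℕ → List Bool := fun n => ((Encodable.decode n : Option (List Bool)).getD [])
  let t : ℕ → {l : List Bool // l ∈ L} :=
    fun n => if h : f n ∈ L then ⟨f n, h⟩ else ⟨[], hnil⟩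
  have htsurj : ∀ u ∈ L, ∃ n, (t n).1 = u := by
    intro u hu
    refine ⟨Encodable.encode u, ?_⟩
    have hf : f (Encodable.encode u) = u := by simp [f, Encodable.encodek]
    simp [t, hf, hu]
  let w0 : {l : List Bool // l ∈ L} := ⟨u0, hu0⟩
  have hw0 : w0.1 ≠ [] := hu0ne
  set ξ := RecWordAux.xi L hc t w0 with hξdef
  -- Factors ξ ⊆ L
  have hFsub : Factors ξ ⊆ L := by
    rintro u ⟨i, hfa⟩
    set n := 2 * (i.natAbs + u.length + 1) with hn
    have hlb := RecWordAux.lseq_bound L hc t w0 hw0 (i.natAbs + u.length + 1)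
    have hrb := RecWordAux.rseq_bound L hc t w0 hw0 (i.natAbs + u.length + 1)
    rw [← hn] at hlb hrb
    have hl : RecWordAux.lseq L hc t w0 n ≤ i := by omega
    have hr : i + u.length ≤ RecWordAux.rseq L hc t w0 n := by omega
    have hrlen : RecWordAux.rseq L hc t w0 n
        = RecWordAux.lseq L hc t w0 n + (RecWordAux.wseq L hc t w0 n).1.length := rfl
    set a := (i - RecWordAux.lseq L hc t w0 n).toNat with hadef
    have hai : (a : ℤ) = i - RecWordAux.lseq L hc t w0 n := Int.toNat_of_nonneg (by omega)
    have halen : a + u.length ≤ (RecWordAux.wseq L hc t w0 n).1.length := by omega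
    have hu_eq : u = (((RecWordAux.wseq L hc t w0 n).1.drop a).take u.length) := by
      apply List.ext_getElem
      · simp; omega
      · intro k hk1 hk2
        have hk : k < u.length := hk1
        have h1 : u[k] = u.getD k false := (List.getD_eq_getElem u false hk).symm
        have h2 := hfa k hk
        have h3 : ξ (i + k)
            = (RecWordAux.wseq L hc t w0 n).1.getD
                (i + k - RecWordAux.lseq L hc t w0 n).toNat false := by
          rw [hξdef]
          exact RecWordAux.xi_eq L hc t w0 hw0 n (i + k) (by omega) (by omega)
        have h4 : (i + k - RecWordAux.lseq L hc t w0 n).toNat = a + k := by omega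
        have h5 : a + k < (RecWordAux.wseq L hc t w0 n).1.length := by omega
        have h6 : (RecWordAux.wseq L hc t w0 n).1.getD (a + k) false
            = (RecWordAux.wseq L hc t w0 n).1[a + k] :=
          List.getD_eq_getElem _ false h5
        rw [h1, h2, h3, h4, h6]
        rw [List.getElem_take, List.getElem_drop]
    have hsplit0 : (RecWordAux.wseq L hc t w0 n).1
        = (RecWordAux.wseq L hc t w0 n).1.take a
            ++ ((RecWordAux.wseq L hc t w0 n).1.drop a).take u.length
            ++ (RecWordAux.wseq L hc t w0 n).1.drop (a + u.length) := by
      conv_rhs => rw [← List.drop_drop, List.append_assoc, List.take_append_drop,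
        List.take_append_drop]
    have hsplit : (RecWordAux.wseq L hc t w0 n).1
        = (RecWordAux.wseq L hc t w0 n).1.take a ++ u
            ++ (RecWordAux.wseq L hc t w0 n).1.drop (a + u.length) := by
      conv_lhs => rw [hsplit0]
      rw [← hu_eq]
    exact hb _ _ _ (hsplit ▸ (RecWordAux.wseq L hc t w0 n).2)
  -- L ⊆ Factors ξ
  have hLsub : L ⊆ Factors ξ := by
    intro u hu
    obtain ⟨m, htm⟩ := htsurj u hu
    obtain ⟨p, q, hpq⟩ := RecWordAux.glueM_pq L hc (RecWordAux.wseq L hc t w0 m) (t m)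
    have hdecomp : (RecWordAux.wseq L hc t w0 (m+1)).1
        = ((RecWordAux.wseq L hc t w0 m).1 ++ p) ++ u
            ++ (q ++ (RecWordAux.wseq L hc t w0 m).1) := by
      rw [RecWordAux.wseq_succ, hpq, htm]
      simp
    have hfa := RecWordAux.factorAt_wseq L hc t w0 hw0 (m+1)
    rw [hdecomp] at hfa
    exact ⟨_, RecWordAux.factorAt_infix hfa⟩
  have hFL : Factors ξ = L := Set.Subset.antisymm hFsub hLsub
  refine ⟨ξ, ?_, hFL⟩
  -- Recurrence
  intro u huF i
  have huL : u ∈ L := hFsub huF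
  obtain ⟨m, htm⟩ := htsurj u huL
  obtain ⟨p, q, hpq⟩ := RecWordAux.glueM_pq L hc (RecWordAux.wseq L hc t w0 m) (t m)
  set W1 := (RecWordAux.wseq L hc t w0 (m+1)).1 with hW1
  set A := (RecWordAux.wseq L hc t w0 m).1 ++ p with hA
  have hdecomp : W1 = A ++ u ++ (q ++ (RecWordAux.wseq L hc t w0 m).1) := by
    rw [hW1, RecWordAux.wseq_succ, hpq, htm, hA]
    simp
  have hW1len : A.length + u.length ≤ W1.length := by
    rw [hdecomp]; simp
  set k := (m + 1) + W1.length + i.natAbs with hk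
  have hlb := RecWordAux.lseq_bound L hc t w0 hw0 k
  have hrb := RecWordAux.rseq_bound L hc t w0 hw0 k
  have hm2k : m + 1 ≤ 2 * k := by omega
  constructor
  · -- far left
    obtain ⟨s, hs⟩ := RecWordAux.wseq_prefix L hc t w0 hm2k
    rw [← hW1] at hs
    have hfa := RecWordAux.factorAt_wseq L hc t w0 hw0 (2 * k)
    rw [hs, hdecomp] at hfa
    have hfa2 : FactorAt ξ u (RecWordAux.lseq L hc t w0 (2 * k) + A.length) := by
      have : (A ++ u ++ (q ++ (RecWordAux.wseq L hc t w0 m).1)) ++ s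
          = A ++ u ++ ((q ++ (RecWordAux.wseq L hc t w0 m).1) ++ s) := by simp
      rw [this] at hfa
      exact RecWordAux.factorAt_infix hfa
    refine ⟨_, ?_, hfa2⟩
    omega
  · -- far right
    obtain ⟨s, hs⟩ := RecWordAux.wseq_suffix L hc t w0 hm2k
    rw [← hW1] at hs
    have hfa := RecWordAux.factorAt_wseq L hc t w0 hw0 (2 * k)
    rw [hs, hdecomp] at hfa
    have hfa2 : FactorAt ξ u (RecWordAux.lseq L hc t w0 (2 * k) + (s ++ A).length) := by
      have : s ++ (A ++ u ++ (q ++ (RecWordAux.wseq L hc t w0 m).1))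
          = (s ++ A) ++ u ++ (q ++ (RecWordAux.wseq L hc t w0 m).1) := by simp
      rw [this] at hfa
      exact RecWordAux.factorAt_infix hfa
    refine ⟨_, ?_, hfa2⟩
    have hlen : (RecWordAux.wseq L hc t w0 (2*k)).1.length = s.length + W1.length := by
      rw [hs]; simp
    have hrlen : RecWordAux.rseq L hc t w0 (2*k)
        = RecWordAux.lseq L hc t w0 (2*k) + (RecWordAux.wseq L hc t w0 (2*k)).1.length := rfl
    simp only [List.length_append]
    push_cast
    omega
end

section
/- Let ξ : ℤ → {0,1} be a recurrent bi-infinite word that is not periodic. Then no factor of ξ is right-determining: for every u ∈ F(ξ) there exist k ∈ ℕ and two distinct words v, v' ∈ {0,1}^k with uv ∈ F(ξ) and uv' ∈ F(ξ). -/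
/-- The factor of `ξ` of length `L` starting at `n`. -/
def seg (ξ : ℤ → Bool) (n : ℤ) (L : ℕ) : List Bool :=
  (List.range L).map fun k : ℕ => ξ (n + (k : ℤ))

lemma seg_length (ξ : ℤ → Bool) (n : ℤ) (L : ℕ) : (seg ξ n L).length = L := by
  rw [seg, List.length_map, List.length_range]

lemma seg_getD (ξ : ℤ → Bool) (n : ℤ) {L k : ℕ} (h : k < L) :
    (seg ξ n L).getD k false = ξ (n + k) := by
  rw [List.getD_eq_getElem _ _ (by simpa [seg_length] using h)]
  simp only [seg, List.getElem_map, List.getElem_range]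

lemma factorAt_seg (ξ : ℤ → Bool) (n : ℤ) (L : ℕ) : FactorAt ξ (seg ξ n L) n := by
  intro k hk
  exact seg_getD ξ n (by simpa [seg_length] using hk)

theorem no_right_determining_factor (ξ : ℤ → Bool) (hrec : Recurrent ξ)
    (hnp : ¬ BiPeriodic ξ) :
    ∀ u ∈ Factors ξ, ∃ (k : ℕ) (v v' : List Bool),
      v ≠ v' ∧ v.length = k ∧ v'.length = k ∧
      u ++ v ∈ Factors ξ ∧ u ++ v' ∈ Factors ξ := by
  intro u hu
  by_contra hcon
  push_neg at hcon
  obtain ⟨i, hi⟩ := hu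
  obtain ⟨-, j, hij, hj⟩ := hrec u ⟨i, hi⟩ (i + 1)
  set p : ℤ := j - i with hp
  have hp0 : 0 < p := by omega
  have key : ∀ n : ℕ, ξ (i + u.length + n) = ξ (i + u.length + p + n) := by
    intro n
    have h1 : u ++ seg ξ (i + u.length) (n + 1) ∈ Factors ξ :=
      ⟨i, factorAt_append hi (factorAt_seg ξ _ _)⟩
    have h2 : u ++ seg ξ (j + u.length) (n + 1) ∈ Factors ξ :=
      ⟨j, factorAt_append hj (factorAt_seg ξ _ _)⟩
    have heq : seg ξ (i + u.length) (n + 1) = seg ξ (j + u.length) (n + 1) := by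
      by_contra hne
      exact hcon (n + 1) _ _ hne (seg_length ξ _ _) (seg_length ξ _ _) h1 h2
    have h3 := congrArg (fun l => l.getD n false) heq
    simp only [seg_getD ξ _ (Nat.lt_succ_self n)] at h3
    rw [h3]
    congr 1
    omega
  have per : ∀ m : ℤ, i + u.length ≤ m → ξ m = ξ (m + p) := by
    intro m hm
    have h1 := key (m - (i + u.length)).toNat
    have h2 : (((m - (i + u.length)).toNat : ℕ) : ℤ) = m - (i + u.length) := by omega
    rw [h2] at h1
    have e1 : i + (u.length : ℤ) + (m - (i + u.length)) = m := by ring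
    have e2 : i + (u.length : ℤ) + p + (m - (i + u.length)) = m + p := by ring
    rwa [e1, e2] at h1
  apply hnp
  refine ⟨p, hp0, ?_⟩
  intro n
  set L : ℕ := (i + u.length - n).toNat + p.toNat + 1 with hL
  have hw : seg ξ n L ∈ Factors ξ := ⟨n, factorAt_seg ξ n L⟩
  obtain ⟨-, j', hj'1, hj'2⟩ := hrec _ hw (i + u.length)
  have e0 : ξ n = ξ j' := by
    have h1 := hj'2 0 (by simp [seg_length]; omega)
    rw [seg_getD ξ n (by omega : 0 < L)] at h1
    simpa using h1
  have ep : ξ (n + p) = ξ (j' + p) := by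
    have hlt : p.toNat < L := by omega
    have h1 := hj'2 p.toNat (by simpa [seg_length] using hlt)
    rw [seg_getD ξ n hlt] at h1
    have hc : ((p.toNat : ℕ) : ℤ) = p := by omega
    rwa [hc] at h1
  rw [e0, ep]
  exact per j' hj'1
end

section
/- Let ξ : ℤ → {0,1} be a recurrent non-periodic bi-infinite word. Then the set of bi-infinite words ζ : ℤ → {0,1} that are recurrent and satisfy F(ζ) = F(ξ) has cardinality 2^{ℵ₀}. -/
namespace CRW

def wordOf (c : ℤ → Bool) (i : ℤ) (m : ℕ) : List Bool :=
  List.ofFn (fun x : Fin m => c (i + x))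

lemma length_wordOf (c : ℤ → Bool) (i : ℤ) (m : ℕ) : (wordOf c i m).length = m :=
  List.length_ofFn

lemma getD_wordOf (c : ℤ → Bool) (i : ℤ) {m k : ℕ} (hk : k < m) :
    (wordOf c i m).getD k false = c (i + k) := by
  rw [List.getD_eq_getElem _ _ (by simpa [length_wordOf] using hk)]
  simp [wordOf]

lemma factorAt_wordOf (c : ℤ → Bool) (i : ℤ) (m : ℕ) : FactorAt c (wordOf c i m) i := by
  intro k hk
  rw [length_wordOf] at hk
  exact getD_wordOf c i hk

lemma factorAt_wordOf_iff {c c' : ℤ → Bool} {i j : ℤ} {m : ℕ} :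
    FactorAt c' (wordOf c i m) j ↔ ∀ x : ℕ, x < m → c (i + x) = c' (j + x) := by
  constructor
  · intro h x hx
    have h2 := h x (by simpa [length_wordOf] using hx)
    rwa [getD_wordOf c i hx] at h2
  · intro h k hk
    rw [length_wordOf] at hk
    rw [getD_wordOf c i hk]; exact h k hk

lemma factorAt_congr {c c' : ℤ → Bool} {u : List Bool} {i : ℤ}
    (h : FactorAt c u i) (hc : ∀ n, i ≤ n → n < i + u.length → c n = c' n) :
    FactorAt c' u i := by
  intro k hk
  rw [h k hk, hc (i + k) (by omega) (by omega)]

lemma factorAt_shift {c ξ : ℤ → Bool} {u : List Bool} {i t : ℤ}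
    (h : FactorAt c u i) (hc : ∀ n, i ≤ n → n < i + u.length → c n = ξ (n + t)) :
    FactorAt ξ u (i + t) := by
  intro k hk
  rw [h k hk, hc (i + k) (by omega) (by omega)]
  ring_nf

/-- recurrence to the right, in window form -/
lemma rec_right {ξ : ℤ → Bool} (hrec : Recurrent ξ) (i M : ℤ) (m : ℕ) :
    ∃ j : ℤ, M ≤ j ∧ ∀ x : ℕ, x < m → ξ (i + x) = ξ (j + x) := by
  obtain ⟨-, j, hj, hf⟩ := hrec (wordOf ξ i m) ⟨i, factorAt_wordOf ξ i m⟩ M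
  exact ⟨j, hj, factorAt_wordOf_iff.1 hf⟩

/-- recurrence to the left, in window form -/
lemma rec_left {ξ : ℤ → Bool} (hrec : Recurrent ξ) (i M : ℤ) (m : ℕ) :
    ∃ j : ℤ, j + m ≤ M ∧ ∀ x : ℕ, x < m → ξ (i + x) = ξ (j + x) := by
  obtain ⟨⟨j, hj, hf⟩, -⟩ := hrec (wordOf ξ i m) ⟨i, factorAt_wordOf ξ i m⟩ M
  rw [length_wordOf] at hj
  exact ⟨j, hj, factorAt_wordOf_iff.1 hf⟩

/-- In a recurrent non-periodic word, every finite window extends to a right-special word. -/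
lemma exists_branch {ξ : ℤ → Bool} (hrec : Recurrent ξ) (hnp : ¬ BiPeriodic ξ)
    (i : ℤ) (m : ℕ) :
    ∃ d : ℕ, ∃ j₀ j₁ : ℤ, m ≤ d ∧
      (∀ x : ℕ, x < d → ξ (i + x) = ξ (j₀ + x)) ∧
      (∀ x : ℕ, x < d → ξ (i + x) = ξ (j₁ + x)) ∧
      ξ (j₀ + d) ≠ ξ (j₁ + d) := by
  by_contra hcon
  push_neg at hcon
  -- hcon : ∀ d j₀ j₁, m ≤ d → Occ i j₀ d → Occ i j₁ d → ξ (j₀+d) = ξ (j₁+d)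
  obtain ⟨j, hj, hocc⟩ := rec_right hrec i (i + 1) m
  have key : ∀ n : ℕ, ∀ x : ℕ, x < m + n → ξ (i + x) = ξ (j + x) := by
    intro n
    induction n with
    | zero => intro x hx; exact hocc x (by omega)
    | succ n ih =>
      intro x hx
      rcases lt_or_ge x (m + n) with h | h
      · exact ih x h
      · have hx' : x = m + n := by omega
        subst hx'
        have := hcon (m + n) i j (by omega) (fun y hy => rfl) (fun y hy => ih y hy)
        push_cast at this ⊢
        convert this using 3 <;> ring
  have key' : ∀ x : ℕ, ξ (i + x) = ξ (j + x) := fun x => key (x + 1) x (by omega)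
  -- deduce ξ y = ξ (y + p) for all y ≥ i, p := j - i
  set p : ℤ := j - i with hp
  have hp0 : 0 < p := by omega
  have shift : ∀ y : ℤ, i ≤ y → ξ y = ξ (y + p) := by
    intro y hy
    have := key' (y - i).toNat
    rw [Int.toNat_of_nonneg (by omega)] at this
    have e1 : i + (y - i) = y := by ring
    have e2 : j + (y - i) = y + p := by omega
    rwa [e1, e2] at this
  apply hnp
  refine ⟨p, hp0, fun n => ?_⟩
  -- the word ξ[n, n + p.toNat + 1) occurs at some j' ≥ i
  obtain ⟨j', hj', hocc'⟩ := rec_right hrec n i (p.toNat + 1)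
  have h0 := hocc' 0 (by omega)
  have hP := hocc' p.toNat (by omega)
  have hsh := shift j' hj'
  rw [Int.toNat_of_nonneg (by omega)] at hP
  simp only [Int.cast_ofNat_Int, add_zero] at h0
  calc ξ n = ξ j' := by simpa using h0
    _ = ξ (j' + p) := hsh
    _ = ξ (n + p) := hP.symm

/-- The window `[l,r)` of `c` is a factor of `ξ`. -/
def Win (ξ c : ℤ → Bool) (l r : ℤ) : Prop :=
  ∃ t : ℤ, ∀ n : ℤ, l ≤ n → n < r → c n = ξ (n + t)

lemma finite_factors_le (ξ : ℤ → Bool) (k : ℕ) :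
    {u : List Bool | u ∈ Factors ξ ∧ u.length ≤ k}.Finite :=
  (List.finite_length_le Bool k).subset (fun u hu => hu.2)

lemma allfac_aux {ξ : ℤ → Bool} (S : Set (List Bool)) (hS : S.Finite) :
    ∀ (M : ℤ), S ⊆ Factors ξ →
      (Recurrent ξ → ∃ B : ℤ, M ≤ B ∧ ∀ u ∈ S, ∃ i, M ≤ i ∧ i + u.length ≤ B ∧ FactorAt ξ u i) := by
  refine Set.Finite.induction_on S hS ?_ ?_
  · intro M _ _; exact ⟨M, le_refl M, fun u hu => absurd hu (Set.notMem_empty u)⟩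
  · intro a s ha hs ih M hsub hrec
    obtain ⟨B, hMB, hB⟩ := ih M (fun u hu => hsub (Set.mem_insert_of_mem a hu)) hrec
    obtain ⟨-, j, hj, hf⟩ := hrec a (hsub (Set.mem_insert a s)) M
    refine ⟨max B (j + a.length), by omega, fun u hu => ?_⟩
    rcases Set.mem_insert_iff.1 hu with h | h
    · subst h; exact ⟨j, hj, by omega, hf⟩
    · obtain ⟨i, h1, h2, h3⟩ := hB u h
      exact ⟨i, h1, by omega, h3⟩

lemma allfac_aux_left {ξ : ℤ → Bool} (S : Set (List Bool)) (hS : S.Finite) :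
    ∀ (M : ℤ), S ⊆ Factors ξ →
      (Recurrent ξ → ∃ A : ℤ, A ≤ M ∧ ∀ u ∈ S, ∃ i, A ≤ i ∧ i + u.length ≤ M ∧ FactorAt ξ u i) := by
  refine Set.Finite.induction_on S hS ?_ ?_
  · intro M _ _; exact ⟨M, le_refl M, fun u hu => absurd hu (Set.notMem_empty u)⟩
  · intro a s ha hs ih M hsub hrec
    obtain ⟨A, hMA, hA⟩ := ih M (fun u hu => hsub (Set.mem_insert_of_mem a hu)) hrec
    obtain ⟨⟨j, hj, hf⟩, -⟩ := hrec a (hsub (Set.mem_insert a s)) M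
    refine ⟨min A j, by omega, fun u hu => ?_⟩
    rcases Set.mem_insert_iff.1 hu with h | h
    · subst h; exact ⟨j, by omega, hj, hf⟩
    · obtain ⟨i, h1, h2, h3⟩ := hA u h
      exact ⟨i, by omega, h2, h3⟩

/-- to the right of any `M` there is a region containing all factors of length ≤ k -/
lemma allfac_right {ξ : ℤ → Bool} (hrec : Recurrent ξ) (k : ℕ) (M : ℤ) :
    ∃ B : ℤ, M ≤ B ∧ ∀ u ∈ Factors ξ, u.length ≤ k →
      ∃ i, M ≤ i ∧ i + u.length ≤ B ∧ FactorAt ξ u i := by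
  obtain ⟨B, h1, h2⟩ := allfac_aux _ (finite_factors_le ξ k) M (fun u hu => hu.1) hrec
  exact ⟨B, h1, fun u hu hl => h2 u ⟨hu, hl⟩⟩

lemma allfac_left {ξ : ℤ → Bool} (hrec : Recurrent ξ) (k : ℕ) (M : ℤ) :
    ∃ A : ℤ, A ≤ M ∧ ∀ u ∈ Factors ξ, u.length ≤ k →
      ∃ i, A ≤ i ∧ i + u.length ≤ M ∧ FactorAt ξ u i := by
  obtain ⟨A, h1, h2⟩ := allfac_aux_left _ (finite_factors_le ξ k) M (fun u hu => hu.1) hrec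
  exact ⟨A, h1, fun u hu hl => h2 u ⟨hu, hl⟩⟩

lemma factorAt_of_shift {ξ c : ℤ → Bool} {u : List Bool} {i t : ℤ}
    (h : FactorAt ξ u (i + t))
    (hc : ∀ n, i ≤ n → n < i + u.length → c n = ξ (n + t)) : FactorAt c u i := by
  intro k hk
  rw [h k hk, hc (i + k) (by omega) (by omega)]
  congr 1; ring

/-- One full construction step: given a window that is a factor of `ξ`, produce, for
each bit `b`, an extended window which is still a factor of `ξ`, extends strictly on
both sides, carries the bit `b` at the (b-independent) position `p`, and contains all
factors of `ξ` of length ≤ k in the fresh part on each side. -/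
lemma main_step {ξ : ℤ → Bool} (hrec : Recurrent ξ) (hnp : ¬ BiPeriodic ξ)
    (c : ℤ → Bool) (l r : ℤ) (k : ℕ) (hlr : l ≤ r) (hw : Win ξ c l r) :
    ∃ p : ℤ, ∃ g : Bool → (ℤ → Bool) × ℤ × ℤ, r ≤ p ∧ ∀ b : Bool,
      (g b).2.1 < l ∧ p < (g b).2.2 ∧ Win ξ (g b).1 (g b).2.1 (g b).2.2 ∧
      (∀ n, l ≤ n → n < r → (g b).1 n = c n) ∧ (g b).1 p = b ∧
      (∀ u ∈ Factors ξ, u.length ≤ k →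
        (∃ i, (g b).2.1 ≤ i ∧ i + u.length ≤ l ∧ FactorAt (g b).1 u i) ∧
        (∃ i, p < i ∧ i + u.length ≤ (g b).2.2 ∧ FactorAt (g b).1 u i)) := by
  obtain ⟨t, ht⟩ := hw
  set m : ℕ := (r - l).toNat with hm
  have hmrl : (m : ℤ) = r - l := Int.toNat_of_nonneg (by omega)
  obtain ⟨d, j₀, j₁, hmd, ho0, ho1, hne⟩ := exists_branch hrec hnp (l + t) m
  have hstep : ∀ b : Bool, ∃ s : (ℤ → Bool) × ℤ × ℤ,
      s.2.1 < l ∧ l + d < s.2.2 ∧ Win ξ s.1 s.2.1 s.2.2 ∧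
      (∀ n, l ≤ n → n < r → s.1 n = c n) ∧ s.1 (l + d) = b ∧
      (∀ u ∈ Factors ξ, u.length ≤ k →
        (∃ i, s.2.1 ≤ i ∧ i + u.length ≤ l ∧ FactorAt s.1 u i) ∧
        (∃ i, l + d < i ∧ i + u.length ≤ s.2.2 ∧ FactorAt s.1 u i)) := by
    intro b
    -- choose the occurrence realizing bit b
    set jb : ℤ := if ξ (j₀ + d) = b then j₀ else j₁ with hjbdef
    have hjb : ξ (jb + d) = b := by
      by_cases h : ξ (j₀ + d) = b
      · simp [hjbdef, h]
      · have : ξ (j₁ + d) = b := by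
          cases hb : ξ (j₀ + d) <;> cases b <;> simp_all
        simp [hjbdef, h, this]
    have hob : ∀ x : ℕ, x < d → ξ (l + t + x) = ξ (jb + x) := by
      intro x hx
      by_cases h : ξ (j₀ + d) = b
      · rw [hjbdef]; simp only [h, if_pos rfl]; exact ho0 x hx
      · rw [hjbdef, if_neg h]; exact ho1 x hx
    set t₁ : ℤ := jb - l with ht₁
    have hW1 : ∀ n, l ≤ n → n < r → c n = ξ (n + t₁) := by
      intro n h1 h2
      have hx : ((n - l).toNat : ℤ) = n - l := Int.toNat_of_nonneg (by omega)
      have h3 := hob (n - l).toNat (by omega)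
      rw [hx] at h3
      have e1 : l + t + (n - l) = n + t := by ring
      have e2 : jb + (n - l) = n + t₁ := by rw [ht₁]; ring
      rw [e1, e2] at h3
      rw [ht n h1 h2, h3]
    set p : ℤ := l + d with hpdef
    set c₁ : ℤ → Bool := fun n => if n < r then c n else ξ (n + t₁) with hc₁
    have hW1' : ∀ n, l ≤ n → n < p + 1 → c₁ n = ξ (n + t₁) := by
      intro n h1 h2
      by_cases h : n < r
      · simp only [hc₁, if_pos h]; exact hW1 n h1 h
      · simp only [hc₁, if_neg h]
    -- right extension containing all short factors
    obtain ⟨B, hMB, hB⟩ := allfac_right hrec k (p + 1 + t₁)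
    set r' : ℤ := max (p + 2) (B - t₁) with hr'
    set c₂ : ℤ → Bool := fun n => if n < p + 1 then c₁ n else ξ (n + t₁) with hc₂
    have hW2 : ∀ n, l ≤ n → n < r' → c₂ n = ξ (n + t₁) := by
      intro n h1 h2
      by_cases h : n < p + 1
      · simp only [hc₂, if_pos h]; exact hW1' n h1 h
      · simp only [hc₂, if_neg h]
    -- left extension containing all short factors
    obtain ⟨A, hAM, hA⟩ := allfac_left hrec k (l + t₁)
    set l' : ℤ := min (l - 1) (A - t₁) with hl'
    set c₃ : ℤ → Bool := fun n => if l ≤ n then c₂ n else ξ (n + t₁) with hc₃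
    have hW3 : ∀ n, n < r' → c₃ n = ξ (n + t₁) := by
      intro n h2
      by_cases h : l ≤ n
      · simp only [hc₃, if_pos h]; exact hW2 n h h2
      · simp only [hc₃, if_neg h]
    refine ⟨(c₃, l', r'), show l' < l by omega, show l + d < r' by omega,
      ⟨t₁, fun n _ h2 => hW3 n h2⟩, ?_, ?_, ?_⟩
    · -- agreement with c on [l, r)
      intro n h1 h2
      simp only [hc₃, if_pos h1, hc₂, if_pos (show n < p + 1 by omega), hc₁, if_pos h2]
    · -- the branch bit
      show c₃ (l + d) = b
      have hplp : p = l + d := rfl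
      rw [← hplp]
      have h1 : l ≤ p := by omega
      have : c₃ p = ξ (p + t₁) := hW3 p (by omega)
      rw [this]
      have : p + t₁ = jb + d := by rw [hpdef, ht₁]; ring
      rw [this, hjb]
    · -- all short factors occur on both fresh sides
      intro u hu hlen
      constructor
      · obtain ⟨iξ, h1, h2, h3⟩ := hA u hu hlen
        refine ⟨iξ - t₁, show l' ≤ iξ - t₁ by omega, show iξ - t₁ + u.length ≤ l by omega, ?_⟩
        refine factorAt_of_shift (by rwa [show iξ - t₁ + t₁ = iξ by ring]) ?_
        intro n hn1 hn2
        exact hW3 n (by omega)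
      · obtain ⟨iξ, h1, h2, h3⟩ := hB u hu hlen
        refine ⟨iξ - t₁, show l + d < iξ - t₁ by omega, show iξ - t₁ + u.length ≤ r' by omega, ?_⟩
        refine factorAt_of_shift (by rwa [show iξ - t₁ + t₁ = iξ by ring]) ?_
        intro n hn1 hn2
        exact hW3 n (by omega)
  choose g hg using hstep
  exact ⟨l + d, g, by omega, hg⟩

section Construction

variable (ξ : ℤ → Bool) (hrec : Recurrent ξ) (hnp : ¬ BiPeriodic ξ)

/-- specification of one construction step -/
def Spec (c : ℤ → Bool) (l r : ℤ) (k : ℕ) (pg : ℤ × (Bool → (ℤ → Bool) × ℤ × ℤ)) : Prop :=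
  r ≤ pg.1 ∧ ∀ b : Bool,
    (pg.2 b).2.1 < l ∧ pg.1 < (pg.2 b).2.2 ∧ Win ξ (pg.2 b).1 (pg.2 b).2.1 (pg.2 b).2.2 ∧
    (∀ n, l ≤ n → n < r → (pg.2 b).1 n = c n) ∧ (pg.2 b).1 pg.1 = b ∧
    (∀ u ∈ Factors ξ, u.length ≤ k →
      (∃ i, (pg.2 b).2.1 ≤ i ∧ i + u.length ≤ l ∧ FactorAt (pg.2 b).1 u i) ∧
      (∃ i, pg.1 < i ∧ i + u.length ≤ (pg.2 b).2.2 ∧ FactorAt (pg.2 b).1 u i))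

open Classical in
noncomputable def pick (c : ℤ → Bool) (l r : ℤ) (k : ℕ) :
    ℤ × (Bool → (ℤ → Bool) × ℤ × ℤ) :=
  if h : l ≤ r ∧ Win ξ c l r then
    ⟨(main_step hrec hnp c l r k h.1 h.2).choose,
     (main_step hrec hnp c l r k h.1 h.2).choose_spec.choose⟩
  else ⟨r, fun _ => (c, l, r)⟩

lemma pick_spec {c : ℤ → Bool} {l r : ℤ} (k : ℕ) (hlr : l ≤ r) (hw : Win ξ c l r) :
    Spec ξ c l r k (pick ξ hrec hnp c l r k) := by
  rw [pick, dif_pos ⟨hlr, hw⟩]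
  have h := (main_step hrec hnp c l r k hlr hw).choose_spec.choose_spec
  exact h

/-- the sequence of states of the construction driven by `s` -/
noncomputable def st (s : ℕ → Bool) : ℕ → (ℤ → Bool) × ℤ × ℤ
  | 0 => (fun _ => false, 0, 0)
  | j + 1 =>
    (pick ξ hrec hnp (st s j).1 (st s j).2.1 (st s j).2.2 j).2 (s j)

/-- the branching position at step j -/
noncomputable def bp (s : ℕ → Bool) (j : ℕ) : ℤ :=
  (pick ξ hrec hnp (st ξ hrec hnp s j).1 (st ξ hrec hnp s j).2.1 (st ξ hrec hnp s j).2.2 j).1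

lemma st_succ (s : ℕ → Bool) (j : ℕ) :
    st ξ hrec hnp s (j + 1) =
      (pick ξ hrec hnp (st ξ hrec hnp s j).1 (st ξ hrec hnp s j).2.1
        (st ξ hrec hnp s j).2.2 j).2 (s j) := rfl

lemma st_inv (s : ℕ → Bool) : ∀ j : ℕ,
    (st ξ hrec hnp s j).2.1 ≤ -(j : ℤ) ∧ (j : ℤ) ≤ (st ξ hrec hnp s j).2.2 ∧
      Win ξ (st ξ hrec hnp s j).1 (st ξ hrec hnp s j).2.1 (st ξ hrec hnp s j).2.2 := by
  intro j
  induction j with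
  | zero =>
    refine ⟨by simp [st], by simp [st], 0, fun n h1 h2 => ?_⟩
    simp only [st] at h1 h2; omega
  | succ j ih =>
    obtain ⟨hl, hr, hw⟩ := ih
    have hspec := pick_spec ξ hrec hnp (c := (st ξ hrec hnp s j).1) j (by omega) hw
    obtain ⟨hrp, hb⟩ := hspec
    obtain ⟨h1, h2, h3, -⟩ := hb (s j)
    rw [st_succ]
    exact ⟨by push_cast; omega, by push_cast; omega, h3⟩

/-- full spec of step `j`, relating consecutive states -/
lemma st_step (s : ℕ → Bool) (j : ℕ) :
    (st ξ hrec hnp s j).2.2 ≤ bp ξ hrec hnp s j ∧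
    (st ξ hrec hnp s (j+1)).2.1 < (st ξ hrec hnp s j).2.1 ∧
    bp ξ hrec hnp s j < (st ξ hrec hnp s (j+1)).2.2 ∧
    (∀ n, (st ξ hrec hnp s j).2.1 ≤ n → n < (st ξ hrec hnp s j).2.2 →
      (st ξ hrec hnp s (j+1)).1 n = (st ξ hrec hnp s j).1 n) ∧
    (st ξ hrec hnp s (j+1)).1 (bp ξ hrec hnp s j) = s j ∧
    (∀ u ∈ Factors ξ, u.length ≤ j →
      (∃ i, (st ξ hrec hnp s (j+1)).2.1 ≤ i ∧ i + u.length ≤ (st ξ hrec hnp s j).2.1 ∧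
        FactorAt (st ξ hrec hnp s (j+1)).1 u i) ∧
      (∃ i, bp ξ hrec hnp s j < i ∧ i + u.length ≤ (st ξ hrec hnp s (j+1)).2.2 ∧
        FactorAt (st ξ hrec hnp s (j+1)).1 u i)) := by
  obtain ⟨hl, hr, hw⟩ := st_inv ξ hrec hnp s j
  have hspec := pick_spec ξ hrec hnp (c := (st ξ hrec hnp s j).1) j (by omega) hw
  obtain ⟨hrp, hb⟩ := hspec
  obtain ⟨h1, h2, h3, h4, h5, h6⟩ := hb (s j)
  rw [st_succ]
  exact ⟨hrp, h1, h2, h4, h5, h6⟩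

lemma st_nested (s : ℕ → Bool) {j m : ℕ} (h : j ≤ m) :
    (st ξ hrec hnp s m).2.1 ≤ (st ξ hrec hnp s j).2.1 ∧
    (st ξ hrec hnp s j).2.2 ≤ (st ξ hrec hnp s m).2.2 := by
  induction m with
  | zero => have : j = 0 := by omega
            subst this; exact ⟨le_refl _, le_refl _⟩
  | succ m ih =>
    rcases Nat.lt_or_ge j (m+1) with h' | h'
    · have := ih (by omega)
      obtain ⟨a1, a2, a3, -⟩ := st_step ξ hrec hnp s m
      exact ⟨by omega, by omega⟩
    · have : j = m + 1 := by omega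
      subst this; exact ⟨le_refl _, le_refl _⟩

lemma st_agree (s : ℕ → Bool) {j m : ℕ} (h : j ≤ m) :
    ∀ n, (st ξ hrec hnp s j).2.1 ≤ n → n < (st ξ hrec hnp s j).2.2 →
      (st ξ hrec hnp s m).1 n = (st ξ hrec hnp s j).1 n := by
  induction m with
  | zero => intro n h1 h2
            have : j = 0 := by omega
            subst this; rfl
  | succ m ih =>
    intro n h1 h2
    rcases Nat.lt_or_ge j (m+1) with h' | h'
    · have hj : j ≤ m := by omega
      obtain ⟨hn1, hn2⟩ := st_nested ξ hrec hnp s hj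
      obtain ⟨-, -, -, ha, -⟩ := st_step ξ hrec hnp s m
      rw [ha n (by omega) (by omega)]
      exact ih hj n h1 h2
    · have : j = m + 1 := by omega
      subst this; rfl

noncomputable def zeta (s : ℕ → Bool) : ℤ → Bool :=
  fun n => (st ξ hrec hnp s (n.natAbs + 1)).1 n

lemma zeta_eq (s : ℕ → Bool) (j : ℕ) (n : ℤ)
    (h1 : (st ξ hrec hnp s j).2.1 ≤ n) (h2 : n < (st ξ hrec hnp s j).2.2) :
    zeta ξ hrec hnp s n = (st ξ hrec hnp s j).1 n := by
  set m : ℕ := max j (n.natAbs + 1) with hm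
  have hjm : j ≤ m := le_max_left _ _
  have hnm : n.natAbs + 1 ≤ m := le_max_right _ _
  obtain ⟨hl', hr', -⟩ := st_inv ξ hrec hnp s (n.natAbs + 1)
  have e1 : (st ξ hrec hnp s m).1 n = (st ξ hrec hnp s (n.natAbs + 1)).1 n :=
    st_agree ξ hrec hnp s hnm n (by omega) (by omega)
  have e2 : (st ξ hrec hnp s m).1 n = (st ξ hrec hnp s j).1 n :=
    st_agree ξ hrec hnp s hjm n h1 h2
  rw [zeta, ← e1, e2]

lemma st_congr (s s' : ℕ → Bool) (j : ℕ) (h : ∀ i, i < j → s i = s' i) :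
    st ξ hrec hnp s j = st ξ hrec hnp s' j := by
  induction j with
  | zero => rfl
  | succ j ih =>
    rw [st_succ, st_succ, ih (fun i hi => h i (by omega)), h j (by omega)]


lemma zeta_factors_sub (s : ℕ → Bool) : Factors (zeta ξ hrec hnp s) ⊆ Factors ξ := by
  rintro u ⟨i, hf⟩
  set j : ℕ := i.natAbs + (i + u.length).natAbs + 1 with hj
  obtain ⟨hl, hr, t, ht⟩ := st_inv ξ hrec hnp s j
  refine ⟨i + t, factorAt_shift hf ?_⟩
  intro n h1 h2
  have hb1 : (st ξ hrec hnp s j).2.1 ≤ n := by omega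
  have hb2 : n < (st ξ hrec hnp s j).2.2 := by omega
  rw [zeta_eq ξ hrec hnp s j n hb1 hb2]
  exact ht n hb1 hb2

lemma zeta_occ (s : ℕ → Bool) {u : List Bool} (hu : u ∈ Factors ξ) (M : ℤ) :
    (∃ i, i + u.length ≤ M ∧ FactorAt (zeta ξ hrec hnp s) u i) ∧
    (∃ i, M ≤ i ∧ FactorAt (zeta ξ hrec hnp s) u i) := by
  set j : ℕ := max u.length M.natAbs with hjdef
  have hlen : u.length ≤ j := le_max_left _ _
  have hM : M.natAbs ≤ j := le_max_right _ _
  obtain ⟨hl, hr, -⟩ := st_inv ξ hrec hnp s j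
  obtain ⟨hl', hr', -⟩ := st_inv ξ hrec hnp s (j + 1)
  obtain ⟨hbp1, hn1, hbp2, -, -, hfac⟩ := st_step ξ hrec hnp s j
  obtain ⟨⟨i, hi1, hi2, hif⟩, ⟨i', hi1', hi2', hif'⟩⟩ := hfac u hu hlen
  constructor
  · refine ⟨i, by omega, factorAt_congr hif ?_⟩
    intro n h1 h2
    exact (zeta_eq ξ hrec hnp s (j+1) n (by omega) (by push_cast at hr' ⊢; omega)).symm
  · refine ⟨i', by omega, factorAt_congr hif' ?_⟩
    intro n h1 h2
    exact (zeta_eq ξ hrec hnp s (j+1) n (by omega) (by omega)).symm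

lemma zeta_factors (s : ℕ → Bool) : Factors (zeta ξ hrec hnp s) = Factors ξ := by
  apply Set.Subset.antisymm (zeta_factors_sub ξ hrec hnp s)
  intro u hu
  obtain ⟨i, -, hf⟩ := (zeta_occ ξ hrec hnp s hu 0).2
  exact ⟨i, hf⟩

lemma zeta_recurrent (s : ℕ → Bool) : Recurrent (zeta ξ hrec hnp s) := by
  intro u hu i
  rw [zeta_factors] at hu
  obtain ⟨⟨j1, hj1, hf1⟩, ⟨j2, hj2, hf2⟩⟩ := zeta_occ ξ hrec hnp s hu i
  exact ⟨⟨j1, hj1, hf1⟩, ⟨j2, hj2, hf2⟩⟩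

lemma zeta_injective : Function.Injective (zeta ξ hrec hnp) := by
  intro s s' hss
  by_contra hne
  have hex : ∃ k, s k ≠ s' k := by
    by_contra h
    push_neg at h
    exact hne (funext h)
  set k := Nat.find hex with hk
  have hdiff : s k ≠ s' k := Nat.find_spec hex
  have hag : ∀ i, i < k → s i = s' i := by
    intro i hi
    by_contra h
    exact Nat.find_min hex hi h
  have hst : st ξ hrec hnp s k = st ξ hrec hnp s' k := st_congr ξ hrec hnp s s' k hag
  have hbp : bp ξ hrec hnp s k = bp ξ hrec hnp s' k := by rw [bp, bp, hst]
  obtain ⟨hl, hr, -⟩ := st_inv ξ hrec hnp s k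
  obtain ⟨hl', hr', -⟩ := st_inv ξ hrec hnp s' k
  obtain ⟨hbp1, hn1, hbp2, -, hbit, -⟩ := st_step ξ hrec hnp s k
  obtain ⟨hbp1', hn1', hbp2', -, hbit', -⟩ := st_step ξ hrec hnp s' k
  have hz : zeta ξ hrec hnp s (bp ξ hrec hnp s k) = s k := by
    rw [zeta_eq ξ hrec hnp s (k+1) _ (by omega) (by omega)]
    exact hbit
  have hz' : zeta ξ hrec hnp s' (bp ξ hrec hnp s k) = s' k := by
    rw [hbp]
    rw [zeta_eq ξ hrec hnp s' (k+1) _ (by omega) (by omega)]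
    exact hbit'
  rw [hss] at hz
  rw [hz] at hz'
  exact hdiff hz'

end Construction

end CRW

theorem continuum_many_recurrent_words_with_same_factors (ξ : ℤ → Bool)
    (hrec : Recurrent ξ) (hnp : ¬ BiPeriodic ξ) :
    Cardinal.mk {ζ : ℤ → Bool // Recurrent ζ ∧ Factors ζ = Factors ξ} =
      Cardinal.continuum := by
  apply le_antisymm
  · calc Cardinal.mk {ζ : ℤ → Bool // Recurrent ζ ∧ Factors ζ = Factors ξ}
        ≤ Cardinal.mk (ℤ → Bool) := Cardinal.mk_subtype_le _
      _ = Cardinal.continuum := by simp [Cardinal.mk_arrow, Cardinal.mk_int]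
  · have h1 : Cardinal.continuum = Cardinal.mk (ℕ → Bool) := by
      simp [Cardinal.mk_arrow]
    rw [h1]
    apply Cardinal.mk_le_of_injective
      (f := fun s : ℕ → Bool =>
        (⟨CRW.zeta ξ hrec hnp s, CRW.zeta_recurrent ξ hrec hnp s,
          CRW.zeta_factors ξ hrec hnp s⟩ :
          {ζ : ℤ → Bool // Recurrent ζ ∧ Factors ζ = Factors ξ}))
    intro s s' h
    exact CRW.zeta_injective ξ hrec hnp (congrArg Subtype.val h)
end

section
/- Let ξ : ℤ → {0,1} be a recurrent non-periodic bi-infinite word and fix a surjection f : ℕ → F(ξ). For every set A ⊆ ℕ there exists a recurrent bi-infinite word ξ_A with F(ξ_A) = F(ξ), and the map A ↦ ξ_A is injective. Consequently there are at least 2^{ℵ₀} recurrent bi-infinite words with the same factor set as ξ. -/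
namespace Aux
variable (ξ : ℤ → Bool)

def read (i : ℤ) (l : ℕ) : List Bool := List.ofFn (fun k : Fin l => ξ (i + (k : ℕ)))

@[simp] lemma read_length (i : ℤ) (l : ℕ) : (read ξ i l).length = l := by
  simp [read]

lemma read_getD {i : ℤ} {l k : ℕ} (hk : k < l) :
    (read ξ i l).getD k false = ξ (i + k) := by
  rw [List.getD_eq_getElem _ _ (by simpa using hk)]
  simp [read]

lemma factorAt_read (i : ℤ) (l : ℕ) : FactorAt ξ (read ξ i l) i := by
  intro k hk
  exact read_getD ξ (by simpa using hk)

lemma getD_append_left {u v : List Bool} {k : ℕ} (hk : k < u.length) :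
    (u ++ v).getD k false = u.getD k false := by
  rw [List.getD_eq_getElem _ _ (by simp; omega), List.getD_eq_getElem _ _ hk]
  exact List.getElem_append_left hk

lemma getD_append_right (u v : List Bool) (k : ℕ) :
    (u ++ v).getD (u.length + k) false = v.getD k false := by
  rcases Nat.lt_or_ge k v.length with h | h
  · rw [List.getD_eq_getElem _ _ (by simp; omega), List.getD_eq_getElem _ _ h]
    rw [List.getElem_append_right (by omega)]
    congr 1
    omega
  · rw [List.getD_eq_default _ _ (by simp; omega), List.getD_eq_default _ _ (by omega)]

lemma factorAt_append {u v : List Bool} {i : ℤ}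
    (hu : FactorAt ξ u i) (hv : FactorAt ξ v (i + u.length)) :
    FactorAt ξ (u ++ v) i := by
  intro k hk
  rcases Nat.lt_or_ge k u.length with h | h
  · rw [getD_append_left h]; exact hu k h
  · obtain ⟨k', rfl⟩ : ∃ k', k = u.length + k' := ⟨k - u.length, by omega⟩
    rw [getD_append_right]
    rw [hv k' (by simp at hk; omega)]
    congr 1
    push_cast
    ring

variable {ξ}

lemma not_rightDet (hrec : Recurrent ξ) (hnp : ¬ BiPeriodic ξ)
    {u : List Bool} (hu : u ∈ Factors ξ) (hne : u ≠ []) : ¬ RightDet ξ u := by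
  intro hdet
  obtain ⟨i₀, hi₀⟩ := hu
  set e : ℕ → Bool := fun n => ξ (i₀ + u.length + n) with he
  have key : ∀ j : ℤ, FactorAt ξ u j → ∀ n : ℕ, ξ (j + u.length + n) = e n := by
    intro j hj n
    have h1 : (u ++ read ξ (i₀ + u.length) (n + 1)) ∈ Factors ξ :=
      ⟨i₀, factorAt_append ξ hi₀ (factorAt_read ξ _ _)⟩
    have h2 : (u ++ read ξ (j + u.length) (n + 1)) ∈ Factors ξ :=
      ⟨j, factorAt_append ξ hj (factorAt_read ξ _ _)⟩
    have heq : read ξ (j + u.length) (n + 1) = read ξ (i₀ + u.length) (n + 1) :=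
      (hdet (n + 1)).unique ⟨by simp, h2⟩ ⟨by simp, h1⟩
    have := congrArg (fun v => v.getD n false) heq
    rw [read_getD ξ (Nat.lt_succ_self n), read_getD ξ (Nat.lt_succ_self n)] at this
    exact this
  -- occurrence of u to the right of i₀ + |u|
  obtain ⟨j₂, hj₂ge, hj₂⟩ := (hrec u ⟨i₀, hi₀⟩ (i₀ + u.length)).2
  set t : ℕ := (j₂ - (i₀ + u.length)).toNat with ht
  have htz : (t : ℤ) = j₂ - i₀ - u.length := by
    rw [ht, Int.toNat_of_nonneg (by omega)]; ring
  set q : ℕ := t + u.length with hq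
  have hq0 : 0 < q := by
    have : u.length ≠ 0 := by simpa using hne
    omega
  have hper : ∀ n : ℕ, e (n + q) = e n := by
    intro n
    have harith : i₀ + (u.length : ℤ) + ((n + q : ℕ) : ℤ) = j₂ + u.length + n := by
      push_cast
      omega
    calc e (n + q) = ξ (i₀ + u.length + ((n + q : ℕ) : ℤ)) := rfl
      _ = ξ (j₂ + u.length + n) := by rw [harith]
      _ = e n := key j₂ hj₂ n
  have hglob : ∀ m : ℤ, ξ m = ξ (m + q) := by
    intro m
    obtain ⟨j, hjle, hj⟩ := (hrec u ⟨i₀, hi₀⟩ m).1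
    set n : ℕ := (m - (j + u.length)).toNat with hn
    have hnz : (n : ℤ) = m - j - u.length := by
      rw [hn, Int.toNat_of_nonneg (by omega)]; ring
    have h1 := key j hj n
    have h2 := key j hj (n + q)
    rw [hper n, ← h1] at h2
    have e1 : j + (u.length : ℤ) + (n : ℕ) = m := by omega
    have e2 : j + (u.length : ℤ) + ((n + q : ℕ) : ℤ) = m + q := by push_cast; omega
    rw [e2, e1] at h2
    exact h2.symm
  exact hnp ⟨(q : ℤ), by exact_mod_cast hq0, fun m => hglob m⟩

lemma exists_branch (hrec : Recurrent ξ) (hnp : ¬ BiPeriodic ξ)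
    {u : List Bool} (hu : u ∈ Factors ξ) :
    ∃ v₀ v₁ : List Bool, v₀.length = v₁.length ∧ v₀ ≠ v₁ ∧
      u ++ v₀ ∈ Factors ξ ∧ u ++ v₁ ∈ Factors ξ := by
  obtain ⟨i, hi⟩ := hu
  have hub : (u ++ read ξ (i + u.length) 1) ∈ Factors ξ :=
    ⟨i, factorAt_append ξ hi (factorAt_read ξ _ _)⟩
  set b : List Bool := read ξ (i + u.length) 1 with hb
  have hbne : u ++ b ≠ [] := by simp [hb, read]
  have hnd := not_rightDet hrec hnp hub hbne
  rw [RightDet] at hnd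
  push_neg at hnd
  obtain ⟨k, hk⟩ := hnd
  obtain ⟨i', hi'⟩ := hub
  set w : List Bool := read ξ (i' + (u ++ b).length) k with hw
  have hwP : w.length = k ∧ (u ++ b) ++ w ∈ Factors ξ :=
    ⟨by simp [hw], ⟨i', factorAt_append ξ hi' (factorAt_read ξ _ _)⟩⟩
  have h2 : ∃ y, (y.length = k ∧ (u ++ b) ++ y ∈ Factors ξ) ∧ y ≠ w := by
    by_contra hcon
    push_neg at hcon
    exact hk ⟨w, hwP, fun y hy => hcon y hy⟩
  obtain ⟨y, hyP, hyne⟩ := h2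
  refine ⟨b ++ y, b ++ w, by simp [hyP.1, hwP.1], ?_, ?_, ?_⟩
  · intro hcontra
    exact hyne (List.append_cancel_left hcontra)
  · rw [← List.append_assoc]; exact hyP.2
  · rw [← List.append_assoc]; exact hwP.2

-- continuing inside namespace Aux, variable {ξ}
lemma factorAt_cons {u : List Bool} {i : ℤ} (hu : FactorAt ξ u i) :
    FactorAt ξ (ξ (i - 1) :: u) (i - 1) := by
  intro k hk
  cases k with
  | zero => simp
  | succ k' =>
    have := hu k' (by simpa using hk)
    simpa [Int.add_comm, Int.add_assoc, Int.add_left_comm] using this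
      -- goal: (ξ (i-1) :: u).getD (k'+1) false = ξ (i - 1 + (k'+1))

lemma leftJoin (hrec : Recurrent ξ) {t w : List Bool}
    (ht : t ∈ Factors ξ) (hw : w ∈ Factors ξ) :
    ∃ v, (t ++ v ++ w) ∈ Factors ξ := by
  obtain ⟨i, hi⟩ := hw
  obtain ⟨j, hj, hjf⟩ := (hrec t ht i).1
  refine ⟨read ξ (j + t.length) (i - (j + t.length)).toNat, j, ?_⟩
  rw [List.append_assoc]
  apply factorAt_append ξ hjf
  apply factorAt_append ξ (factorAt_read ξ _ _)
  have : j + (t.length : ℤ) + ((i - (j + t.length)).toNat : ℤ) = i := by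
    rw [Int.toNat_of_nonneg (by omega)]; ring
  rw [read_length, this]
  exact hi

lemma rightJoin (hrec : Recurrent ξ) {w t : List Bool}
    (hw : w ∈ Factors ξ) (ht : t ∈ Factors ξ) :
    ∃ v, (w ++ v ++ t) ∈ Factors ξ := by
  obtain ⟨i, hi⟩ := hw
  obtain ⟨j, hj, hjf⟩ := (hrec t ht (i + w.length)).2
  refine ⟨read ξ (i + w.length) (j - (i + w.length)).toNat, i, ?_⟩
  rw [List.append_assoc]
  apply factorAt_append ξ hi
  apply factorAt_append ξ (factorAt_read ξ _ _)
  have : i + (w.length : ℤ) + ((j - (i + w.length)).toNat : ℤ) = j := by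
    rw [Int.toNat_of_nonneg (by omega)]; ring
  rw [read_length, this]
  exact hjf

/-- data for one step: (pre, post, v₀, v₁) -/
def StepProp (ξ : ℤ → Bool) (t w : List Bool)
    (d : List Bool × List Bool × List Bool × List Bool) : Prop :=
  (∃ c v, d.1 = c :: (t ++ v)) ∧ (∃ v, d.2.1 = v ++ t) ∧
  d.2.2.1.length = d.2.2.2.length ∧ d.2.2.1 ≠ d.2.2.2 ∧
  d.1 ++ w ++ d.2.1 ++ d.2.2.1 ∈ Factors ξ ∧
  d.1 ++ w ++ d.2.1 ++ d.2.2.2 ∈ Factors ξ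

lemma step_exists' (ξ : ℤ → Bool) (t w : List Bool) :
    ∃ d, Recurrent ξ → ¬ BiPeriodic ξ → t ∈ Factors ξ → w ∈ Factors ξ →
      StepProp ξ t w d := by
  by_cases H : Recurrent ξ ∧ ¬ BiPeriodic ξ ∧ t ∈ Factors ξ ∧ w ∈ Factors ξ
  · obtain ⟨hrec, hnp, ht, hw⟩ := H
    obtain ⟨v₁, h1⟩ := leftJoin hrec ht hw
    obtain ⟨i, hi⟩ := h1
    have h2 : FactorAt ξ (ξ (i - 1) :: (t ++ v₁ ++ w)) (i - 1) := factorAt_cons hi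
    set c : Bool := ξ (i - 1) with hc
    have hw2 : (c :: (t ++ v₁)) ++ w ∈ Factors ξ := by
      refine ⟨i - 1, ?_⟩
      have : (c :: (t ++ v₁)) ++ w = c :: (t ++ v₁ ++ w) := by simp
      rw [this]
      exact h2
    obtain ⟨v₂, h3⟩ := rightJoin hrec hw2 ht
    have h3' : ((c :: (t ++ v₁)) ++ w ++ (v₂ ++ t)) ∈ Factors ξ := by
      have : (c :: (t ++ v₁)) ++ w ++ (v₂ ++ t)
           = (c :: (t ++ v₁)) ++ w ++ v₂ ++ t := by simp
      rw [this]
      exact h3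
    obtain ⟨v₀, v₁', hlen, hne, hm0, hm1⟩ := exists_branch hrec hnp h3'
    refine ⟨(c :: (t ++ v₁), v₂ ++ t, v₀, v₁'), fun _ _ _ _ => ?_⟩
    refine ⟨⟨c, v₁, rfl⟩, ⟨v₂, rfl⟩, hlen, hne, ?_, ?_⟩
    · have : (c :: (t ++ v₁)) ++ w ++ (v₂ ++ t) ++ v₀
           = ((c :: (t ++ v₁)) ++ w ++ (v₂ ++ t)) ++ v₀ := by simp
      rw [this]; exact hm0
    · have : (c :: (t ++ v₁)) ++ w ++ (v₂ ++ t) ++ v₁'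
           = ((c :: (t ++ v₁)) ++ w ++ (v₂ ++ t)) ++ v₁' := by simp
      rw [this]; exact hm1
  · exact ⟨([], [], [], []), fun h1 h2 h3 h4 => absurd ⟨h1, h2, h3, h4⟩ H⟩

noncomputable def stepD (ξ : ℤ → Bool) (t w : List Bool) :
    List Bool × List Bool × List Bool × List Bool :=
  (step_exists' ξ t w).choose

lemma stepD_spec (hrec : Recurrent ξ) (hnp : ¬ BiPeriodic ξ) {t w : List Bool}
    (ht : t ∈ Factors ξ) (hw : w ∈ Factors ξ) :
    StepProp ξ t w (stepD ξ t w) :=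
  (step_exists' ξ t w).choose_spec hrec hnp ht hw

open Classical in
/-- the construction state: (word, left offset) -/
noncomputable def st (ξ : ℤ → Bool) (f : ℕ → List Bool) (A : Set ℕ) : ℕ → List Bool × ℕ
  | 0 => ([], 0)
  | n + 1 =>
    let p := st ξ f A n
    let d := stepD ξ (f (Nat.unpair n).1) p.1
    (d.1 ++ p.1 ++ d.2.1 ++ (if n ∈ A then d.2.2.2 else d.2.2.1), p.2 + d.1.length)

variable {f : ℕ → List Bool} {A : Set ℕ}

lemma empty_mem : ([] : List Bool) ∈ Factors ξ := ⟨0, by intro k hk; simp at hk⟩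

open Classical in
lemma st_w_succ (n : ℕ) : (st ξ f A (n + 1)).1 =
    (stepD ξ (f (Nat.unpair n).1) (st ξ f A n).1).1 ++ (st ξ f A n).1 ++
      (stepD ξ (f (Nat.unpair n).1) (st ξ f A n).1).2.1 ++
      (if n ∈ A then (stepD ξ (f (Nat.unpair n).1) (st ξ f A n).1).2.2.2
       else (stepD ξ (f (Nat.unpair n).1) (st ξ f A n).1).2.2.1) := rfl

lemma st_a_succ (n : ℕ) : (st ξ f A (n + 1)).2 =
    (st ξ f A n).2 + (stepD ξ (f (Nat.unpair n).1) (st ξ f A n).1).1.length := rfl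

lemma st_mem (hrec : Recurrent ξ) (hnp : ¬ BiPeriodic ξ) (hfm : ∀ m, f m ∈ Factors ξ) :
    ∀ n, (st ξ f A n).1 ∈ Factors ξ := by
  intro n
  induction n with
  | zero => exact empty_mem
  | succ n ih =>
    have hd := stepD_spec hrec hnp (hfm (Nat.unpair n).1) ih
    rw [st_w_succ]
    by_cases hA : n ∈ A
    · simp only [hA, if_pos]
      exact hd.2.2.2.2.2
    · simp only [hA, if_neg, not_false_iff]
      exact hd.2.2.2.2.1

lemma stepProp_pre_pos {t w : List Bool} {d} (hd : StepProp ξ t w d) : 1 ≤ d.1.length := by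
  obtain ⟨⟨c, v, h⟩, -⟩ := hd
  simp [h]

lemma stepProp_v_pos {t w : List Bool} {d} (hd : StepProp ξ t w d) :
    1 ≤ d.2.2.1.length ∧ 1 ≤ d.2.2.2.length := by
  obtain ⟨-, -, hlen, hne, -⟩ := hd
  constructor <;>
  · by_contra h
    apply hne
    have h1 : d.2.2.1.length = 0 := by omega
    have h2 : d.2.2.2.length = 0 := by omega
    rw [List.length_eq_zero_iff] at h1 h2
    rw [h1, h2]

lemma st_a_mono (hrec : Recurrent ξ) (hnp : ¬ BiPeriodic ξ) (hfm : ∀ m, f m ∈ Factors ξ)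
    {n m : ℕ} (hnm : n ≤ m) : (st ξ f A n).2 + (m - n) ≤ (st ξ f A m).2 := by
  induction hnm with
  | refl => omega
  | @step m hm ih =>
    have hd := stepD_spec hrec hnp (hfm (Nat.unpair m).1) (st_mem (A := A) hrec hnp hfm m)
    have hp := stepProp_pre_pos hd
    have ha := st_a_succ (ξ := ξ) (f := f) (A := A) m
    simp only [Nat.succ_eq_add_one] at *
    omega

lemma st_a_ge (hrec : Recurrent ξ) (hnp : ¬ BiPeriodic ξ) (hfm : ∀ m, f m ∈ Factors ξ)
    (n : ℕ) : n ≤ (st ξ f A n).2 := by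
  have h := st_a_mono (A := A) hrec hnp hfm (Nat.zero_le n)
  rw [show (st ξ f A 0).2 = 0 from rfl] at h
  omega

lemma st_r_ge (hrec : Recurrent ξ) (hnp : ¬ BiPeriodic ξ) (hfm : ∀ m, f m ∈ Factors ξ)
    (n : ℕ) : (st ξ f A n).2 + n ≤ (st ξ f A n).1.length := by
  induction n with
  | zero => simp [st]
  | succ n ih =>
    have hd := stepD_spec hrec hnp (hfm (Nat.unpair n).1) (st_mem (A := A) hrec hnp hfm n)
    have hv := stepProp_v_pos hd
    have ha := st_a_succ (ξ := ξ) (f := f) (A := A) n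
    have hw := congrArg List.length (st_w_succ (ξ := ξ) (f := f) (A := A) n)
    simp only [List.length_append] at hw
    by_cases hA : n ∈ A
    · rw [if_pos hA] at hw
      omega
    · rw [if_neg hA] at hw
      omega

lemma st_r_mono (hrec : Recurrent ξ) (hnp : ¬ BiPeriodic ξ) (hfm : ∀ m, f m ∈ Factors ξ)
    {n m : ℕ} (hnm : n ≤ m) :
    (st ξ f A n).1.length + (st ξ f A m).2 ≤ (st ξ f A m).1.length + (st ξ f A n).2 := by
  induction hnm with
  | refl => omega
  | @step m hm ih =>
    have ha := st_a_succ (ξ := ξ) (f := f) (A := A) m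
    have hw := congrArg List.length (st_w_succ (ξ := ξ) (f := f) (A := A) m)
    simp only [List.length_append] at hw
    simp only [Nat.succ_eq_add_one] at *
    by_cases hA : m ∈ A
    · rw [if_pos hA] at hw; omega
    · rw [if_neg hA] at hw; omega

lemma st_persist (hrec : Recurrent ξ) (hnp : ¬ BiPeriodic ξ) (hfm : ∀ m, f m ∈ Factors ξ)
    {n m : ℕ} (hnm : n ≤ m) {k : ℕ} (hk : k < (st ξ f A n).1.length) :
    (st ξ f A m).1.getD (((st ξ f A m).2 - (st ξ f A n).2) + k) false
      = (st ξ f A n).1.getD k false := by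
  induction hnm with
  | refl => simp
  | @step m hm ih =>
    have ha := st_a_mono (A := A) hrec hnp hfm hm
    simp only [Nat.succ_eq_add_one] at *
    have heq : (st ξ f A (m+1)).2 - (st ξ f A n).2
        = (stepD ξ (f (Nat.unpair m).1) (st ξ f A m).1).1.length
          + ((st ξ f A m).2 - (st ξ f A n).2) := by
      rw [st_a_succ (ξ := ξ) (f := f) (A := A) m]
      omega
    rw [heq, Nat.add_assoc, st_w_succ]
    have hassoc : ∀ x : List Bool,
        (stepD ξ (f (Nat.unpair m).1) (st ξ f A m).1).1 ++ (st ξ f A m).1 ++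
          (stepD ξ (f (Nat.unpair m).1) (st ξ f A m).1).2.1 ++ x
        = (stepD ξ (f (Nat.unpair m).1) (st ξ f A m).1).1 ++ ((st ξ f A m).1 ++
            ((stepD ξ (f (Nat.unpair m).1) (st ξ f A m).1).2.1 ++ x)) := by
      intro x
      simp [List.append_assoc]
    rw [hassoc, getD_append_right]
    have hkm : ((st ξ f A m).2 - (st ξ f A n).2) + k < (st ξ f A m).1.length := by
      have hr := st_r_mono (A := A) hrec hnp hfm hm
      omega
    rw [getD_append_left hkm]
    exact ih

/-- the limit bi-infinite word -/
noncomputable def gw (ξ : ℤ → Bool) (f : ℕ → List Bool) (A : Set ℕ) : ℤ → Bool :=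
  fun m => (st ξ f A (m.natAbs + 1)).1.getD (m + (st ξ f A (m.natAbs + 1)).2).toNat false

lemma gw_eval (hrec : Recurrent ξ) (hnp : ¬ BiPeriodic ξ) (hfm : ∀ m, f m ∈ Factors ξ)
    {n k : ℕ} (hk : k < (st ξ f A n).1.length) :
    gw ξ f A ((k : ℤ) - (st ξ f A n).2) = (st ξ f A n).1.getD k false := by
  set p : ℤ := (k : ℤ) - (st ξ f A n).2 with hp
  set M : ℕ := p.natAbs + 1 with hM
  rcases le_or_gt n M with h | h
  · have ha := st_a_mono (A := A) hrec hnp hfm h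
    have : (p + (st ξ f A M).2).toNat = ((st ξ f A M).2 - (st ξ f A n).2) + k := by omega
    simp only [gw]
    rw [← hM, this]
    exact st_persist hrec hnp hfm h hk
  · have hM' : M ≤ n := le_of_lt h
    have ha := st_a_mono (A := A) hrec hnp hfm hM'
    have haM := st_a_ge (A := A) hrec hnp hfm M
    have hrM := st_r_ge (A := A) hrec hnp hfm M
    have hpos : 0 ≤ p + (st ξ f A M).2 := by
      have : (p.natAbs : ℤ) + 1 ≤ (st ξ f A M).2 := by exact_mod_cast haM
      omega
    set k' : ℕ := (p + (st ξ f A M).2).toNat with hk'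
    have hk'lt : k' < (st ξ f A M).1.length := by
      have hpn : p < (M : ℤ) := by
        have : (p.natAbs : ℤ) < M := by exact_mod_cast Nat.lt_succ_self p.natAbs
        have := Int.le_natAbs (a := p)
        omega
      omega
    have hper := st_persist (A := A) hrec hnp hfm hM' hk'lt
    have hidx : ((st ξ f A n).2 - (st ξ f A M).2) + k' = k := by omega
    simp only [gw]
    rw [← hM, ← hk']
    rw [← hper, hidx]


lemma sub_mem {w u : List Bool} {s : ℕ} (hw : w ∈ Factors ξ)
    (hlen : s + u.length ≤ w.length)
    (hval : ∀ k, k < u.length → u.getD k false = w.getD (s + k) false) :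
    u ∈ Factors ξ := by
  obtain ⟨i, hi⟩ := hw
  refine ⟨i + s, fun k hk => ?_⟩
  rw [hval k hk, hi (s + k) (by omega)]
  congr 1
  push_cast
  ring

lemma gw_factors_subset (hrec : Recurrent ξ) (hnp : ¬ BiPeriodic ξ)
    (hfm : ∀ m, f m ∈ Factors ξ) :
    Factors (gw ξ f A) ⊆ Factors ξ := by
  rintro u ⟨i, hi⟩
  set n : ℕ := i.natAbs + u.length with hn
  have ha := st_a_ge (A := A) hrec hnp hfm n
  have hr := st_r_ge (A := A) hrec hnp hfm n
  have hspos : 0 ≤ i + (st ξ f A n).2 := by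
    have : (i.natAbs : ℤ) ≤ (st ξ f A n).2 := by exact_mod_cast le_trans (by omega) ha
    omega
  set s : ℕ := (i + (st ξ f A n).2).toNat with hs
  apply sub_mem (w := (st ξ f A n).1) (s := s) (st_mem (A := A) hrec hnp hfm n)
  · have : (i.natAbs : ℤ) ≤ i.natAbs := le_refl _
    have hii : i ≤ (i.natAbs : ℤ) := Int.le_natAbs
    omega
  · intro k hk
    have hidx : s + k < (st ξ f A n).1.length := by
      have hii : i ≤ (i.natAbs : ℤ) := Int.le_natAbs
      omega
    have := gw_eval (A := A) hrec hnp hfm hidx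
    have hpos2 : ((s + k : ℕ) : ℤ) - (st ξ f A n).2 = i + k := by push_cast; omega
    rw [hpos2] at this
    rw [← this]
    exact hi k hk

lemma hit_exists (hf : Set.range f = Factors ξ) {u : List Bool} (hu : u ∈ Factors ξ)
    (N : ℕ) : ∃ m, N ≤ m ∧ f (Nat.unpair m).1 = u := by
  have : u ∈ Set.range f := by rw [hf]; exact hu
  obtain ⟨n, hn⟩ := this
  exact ⟨Nat.pair n N, Nat.right_le_pair n N, by rw [Nat.unpair_pair]; exact hn⟩

lemma gw_occ (hrec : Recurrent ξ) (hnp : ¬ BiPeriodic ξ)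
    (hf : Set.range f = Factors ξ) (hfm : ∀ m, f m ∈ Factors ξ)
    {u : List Bool} (hu : u ∈ Factors ξ) (i : ℤ) :
    (∃ j : ℤ, j + u.length ≤ i ∧ FactorAt (gw ξ f A) u j) ∧
    (∃ j : ℤ, i ≤ j ∧ FactorAt (gw ξ f A) u j) := by
  classical
  obtain ⟨m, hm, hfu⟩ := hit_exists hf hu i.natAbs
  have hmem := st_mem (A := A) hrec hnp hfm m
  have hd := stepD_spec hrec hnp (hfm (Nat.unpair m).1) hmem
  set t : List Bool := f (Nat.unpair m).1 with htdef
  set d := stepD ξ t (st ξ f A m).1 with hddef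
  obtain ⟨⟨c, v, hpre⟩, ⟨v', hpost⟩, -, -, -⟩ := hd
  set w : List Bool := (st ξ f A m).1 with hwdef
  set vb : List Bool :=
    (if m ∈ A then d.2.2.2 else d.2.2.1) with hvb
  have hw1 : (st ξ f A (m + 1)).1 = d.1 ++ w ++ d.2.1 ++ vb := by
    rw [st_w_succ (ξ := ξ) (f := f) (A := A) m, hvb]
  have hlen1 : (st ξ f A (m + 1)).1.length
      = d.1.length + w.length + d.2.1.length + vb.length := by
    rw [hw1]; simp [List.length_append]; omega
  have ha1 : (st ξ f A (m + 1)).2 = (st ξ f A m).2 + d.1.length :=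
    st_a_succ (ξ := ξ) (f := f) (A := A) m
  have ham := st_a_ge (A := A) hrec hnp hfm m
  have hrm := st_r_ge (A := A) hrec hnp hfm m
  rw [← hwdef] at hrm
  have hii : i ≤ (i.natAbs : ℤ) := Int.le_natAbs
  have hii' : -(i.natAbs : ℤ) ≤ i := by omega
  constructor
  · -- left occurrence at local index 1
    refine ⟨1 - ((st ξ f A (m + 1)).2 : ℤ), ?_, ?_⟩
    · rw [ha1, hpre, hfu]
      simp only [List.length_cons, List.length_append]
      push_cast
      rw [← hfu]
      omega
    · intro k hk
      have hidx : 1 + k < (st ξ f A (m + 1)).1.length := by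
        rw [hlen1, hpre]
        simp only [List.length_cons, List.length_append]
        rw [← hfu] at hk
        omega
      have he := gw_eval (A := A) hrec hnp hfm hidx
      have hposeq : ((1 + k : ℕ) : ℤ) - (st ξ f A (m + 1)).2
          = 1 - ((st ξ f A (m + 1)).2 : ℤ) + k := by push_cast; ring
      rw [hposeq] at he
      rw [he, hw1, hpre]
      have hsplit : (c :: (t ++ v)) ++ w ++ d.2.1 ++ vb
          = c :: (t ++ (v ++ (w ++ (d.2.1 ++ vb)))) := by simp
      rw [hsplit, Nat.add_comm 1 k, List.getD_cons_succ,
        getD_append_left (by rw [← hfu] at hk; exact hk)]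
      rw [hfu]
  · -- right occurrence at local index |d.1| + |w| + |v'|
    refine ⟨((d.1.length + w.length + v'.length : ℕ) : ℤ) - (st ξ f A (m + 1)).2, ?_, ?_⟩
    · rw [ha1]
      push_cast
      omega
    · intro k hk
      have hidx : (d.1.length + w.length + v'.length) + k < (st ξ f A (m + 1)).1.length := by
        rw [hlen1, hpost]
        simp only [List.length_append]
        rw [← hfu] at hk
        omega
      have he := gw_eval (A := A) hrec hnp hfm hidx
      have hposeq : (((d.1.length + w.length + v'.length) + k : ℕ) : ℤ)
            - (st ξ f A (m + 1)).2
          = ((d.1.length + w.length + v'.length : ℕ) : ℤ) - (st ξ f A (m + 1)).2 + k := by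
        push_cast; ring
      rw [hposeq] at he
      rw [he, hw1, hpost]
      have hsplit : d.1 ++ w ++ (v' ++ t) ++ vb
          = (d.1 ++ w ++ v') ++ (t ++ vb) := by simp
      have hplen : (d.1 ++ w ++ v').length = d.1.length + w.length + v'.length := by
        simp
        omega
      rw [hsplit, ← hplen, getD_append_right,
        getD_append_left (by rw [← hfu] at hk; exact hk)]
      rw [hfu]

lemma gw_factors (hrec : Recurrent ξ) (hnp : ¬ BiPeriodic ξ)
    (hf : Set.range f = Factors ξ) (hfm : ∀ m, f m ∈ Factors ξ) :
    Factors (gw ξ f A) = Factors ξ := by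
  apply le_antisymm (gw_factors_subset hrec hnp hfm)
  intro u hu
  obtain ⟨j, -, hj⟩ := (gw_occ (A := A) hrec hnp hf hfm hu 0).2
  exact ⟨j, hj⟩

lemma gw_recurrent (hrec : Recurrent ξ) (hnp : ¬ BiPeriodic ξ)
    (hf : Set.range f = Factors ξ) (hfm : ∀ m, f m ∈ Factors ξ) :
    Recurrent (gw ξ f A) := by
  intro u hu i
  rw [gw_factors (A := A) hrec hnp hf hfm] at hu
  exact gw_occ hrec hnp hf hfm hu i

lemma ne_exists_getD {v₀ v₁ : List Bool} (hlen : v₀.length = v₁.length) (h : v₀ ≠ v₁) :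
    ∃ t, t < v₀.length ∧ v₀.getD t false ≠ v₁.getD t false := by
  by_contra hc
  push_neg at hc
  apply h
  apply List.ext_getElem hlen
  intro i h1 h2
  have := hc i h1
  rwa [List.getD_eq_getElem _ _ h1, List.getD_eq_getElem _ _ h2] at this

lemma gw_ne {A B : Set ℕ} (hrec : Recurrent ξ) (hnp : ¬ BiPeriodic ξ)
    (hfm : ∀ m, f m ∈ Factors ξ) {n : ℕ}
    (hst : st ξ f A n = st ξ f B n) (hA : n ∈ A) (hB : n ∉ B) :
    gw ξ f A ≠ gw ξ f B := by
  classical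
  intro heq
  set s := st ξ f A n with hs
  set t : List Bool := f (Nat.unpair n).1 with ht
  set d := stepD ξ t s.1 with hd
  have hdp := stepD_spec hrec hnp (hfm (Nat.unpair n).1) (st_mem (A := A) hrec hnp hfm n)
  rw [← ht, ← hs, ← hd] at hdp
  obtain ⟨-, -, hlen, hne', -⟩ := hdp
  obtain ⟨tt, htt, hvne⟩ := ne_exists_getD hlen hne'
  have hwA : (st ξ f A (n + 1)).1 = d.1 ++ s.1 ++ d.2.1 ++ d.2.2.2 := by
    rw [st_w_succ (ξ := ξ) (f := f) (A := A) n, if_pos hA]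
  have hwB : (st ξ f B (n + 1)).1 = d.1 ++ s.1 ++ d.2.1 ++ d.2.2.1 := by
    rw [st_w_succ (ξ := ξ) (f := f) (A := B) n, if_neg hB, ← hst]
  have haB : (st ξ f B (n + 1)).2 = (st ξ f A (n + 1)).2 := by
    rw [st_a_succ (ξ := ξ) (f := f) (A := B) n, st_a_succ (ξ := ξ) (f := f) (A := A) n, ← hst]
  set k : ℕ := (d.1 ++ s.1 ++ d.2.1).length + tt with hk
  have hkA : k < (st ξ f A (n + 1)).1.length := by
    rw [hwA, hk]
    simp only [List.length_append]
    omega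
  have hkB : k < (st ξ f B (n + 1)).1.length := by
    rw [hwB, hk]
    simp only [List.length_append]
    omega
  have heA := gw_eval (A := A) hrec hnp hfm hkA
  have heB := gw_eval (A := B) hrec hnp hfm hkB
  rw [hwA, hk, getD_append_right] at heA
  rw [hwB, hk, getD_append_right] at heB
  rw [haB] at heB
  rw [heq, heB] at heA
  exact hvne heA

lemma st_eq_of_agree {A B : Set ℕ} {n : ℕ}
    (h : ∀ m, m < n → (m ∈ A ↔ m ∈ B)) : st ξ f A n = st ξ f B n := by
  classical
  induction n with
  | zero => rfl
  | succ n ih =>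
    have ihn := ih (fun m hm => h m (Nat.lt_succ_of_lt hm))
    have hbit : (n ∈ A) = (n ∈ B) := propext (h n (Nat.lt_succ_self n))
    have h1 : (st ξ f A (n+1)).1 = (st ξ f B (n+1)).1 := by
      rw [st_w_succ (ξ := ξ) (f := f) (A := A) n, st_w_succ (ξ := ξ) (f := f) (A := B) n,
        ihn, hbit]
    have h2 : (st ξ f A (n+1)).2 = (st ξ f B (n+1)).2 := by
      rw [st_a_succ (ξ := ξ) (f := f) (A := A) n, st_a_succ (ξ := ξ) (f := f) (A := B) n, ihn]
    exact Prod.ext h1 h2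

lemma gw_injective (hrec : Recurrent ξ) (hnp : ¬ BiPeriodic ξ)
    (hfm : ∀ m, f m ∈ Factors ξ) :
    Function.Injective (fun A : Set ℕ => gw ξ f A) := by
  classical
  intro A B hAB
  by_contra hne
  have hD : ∃ n, ¬(n ∈ A ↔ n ∈ B) := by
    by_contra h
    push_neg at h
    exact hne (Set.ext fun n => h n)
  obtain ⟨n, hn, hmin⟩ := Nat.lt_wfRel.wf.has_min {n | ¬(n ∈ A ↔ n ∈ B)} hD
  have hagree : ∀ m, m < n → (m ∈ A ↔ m ∈ B) := by
    intro m hm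
    by_contra hc
    exact hmin m hc hm
  have hst : st ξ f A n = st ξ f B n := st_eq_of_agree hagree
  rcases Classical.em (n ∈ A) with hA | hA
  · have hB : n ∉ B := fun hB => hn ⟨fun _ => hB, fun _ => hA⟩
    exact gw_ne hrec hnp hfm hst hA hB hAB
  · have hB : n ∈ B := by
      by_contra hB
      exact hn ⟨fun h => absurd h hA, fun h => absurd h hB⟩
    exact gw_ne hrec hnp hfm hst.symm hB hA hAB.symm

end Aux

theorem injective_family_of_recurrent_words (ξ : ℤ → Bool)
    (hrec : Recurrent ξ) (hnp : ¬ BiPeriodic ξ)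
    (f : ℕ → List Bool) (hf : Set.range f = Factors ξ) :
    ∃ g : Set ℕ → (ℤ → Bool),
      (∀ A : Set ℕ, Recurrent (g A) ∧ Factors (g A) = Factors ξ) ∧
      Function.Injective g ∧
      Cardinal.continuum ≤
        Cardinal.mk {ζ : ℤ → Bool // Recurrent ζ ∧ Factors ζ = Factors ξ} := by
  have hfm : ∀ m, f m ∈ Factors ξ := by
    intro m
    rw [← hf]
    exact Set.mem_range_self m
  refine ⟨fun A => Aux.gw ξ f A, fun A => ⟨Aux.gw_recurrent hrec hnp hf hfm,
    Aux.gw_factors hrec hnp hf hfm⟩, Aux.gw_injective hrec hnp hfm, ?_⟩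
  have hinj : Function.Injective
      (fun A : Set ℕ => (⟨Aux.gw ξ f A, Aux.gw_recurrent hrec hnp hf hfm,
        Aux.gw_factors hrec hnp hf hfm⟩ :
        {ζ : ℤ → Bool // Recurrent ζ ∧ Factors ζ = Factors ξ})) := by
    intro A B h
    exact Aux.gw_injective hrec hnp hfm (congrArg Subtype.val h)
  have := Cardinal.mk_le_of_injective hinj
  have hcont : Cardinal.mk (Set ℕ) = Cardinal.continuum := by
    simp [Cardinal.mk_set, Cardinal.two_power_aleph0]
  rwa [hcont] at this
end
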